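/- arXiv:1610.02563 — 6 statements merged into one kernel-verified Lean document; each statement's English description precedes it below -/
import Mathlib

section
/- Given b_* > 1, there exist constants C ≥ 1 and N ≥ 1 such that: (i) for every b ∈ [b_*, 2] and n ≥ N, if φ_j(b) ≠ 0 for all j with 1 ≤ j < n, then the function φ_n is differentiable at b; and (ii) if V ⊆ [b_*, 2] is an interval on which φ_n is differentiable, then C^{-1} b₀^n ≤ |φ_n'(b)| ≤ C b₀^n for all b, b₀ ∈ V. -/
open Filter Set

/-- The tent map `T_b(x) = 1 − b|x|`. -/
noncomputable def tent (b : ℝ) : ℝ → ℝ := fun x => 1 - b * |x|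

/-- `φ_n(b) = T_b^n(1)`, the `n`-th iterate of the critical value as a function of `b`. -/
noncomputable def φ (n : ℕ) (b : ℝ) : ℝ := (tent b)^[n] 1

open Topology

lemma phi_succ (n : ℕ) (b : ℝ) : φ (n+1) b = 1 - b * |φ n b| := by
  simp [φ, Function.iterate_succ_apply', tent]

lemma phi_cont (n : ℕ) : Continuous (fun b => φ n b) := by
  induction n with
  | zero => simpa [φ] using continuous_const
  | succ n ih =>
    simp only [phi_succ]
    exact continuous_const.sub (continuous_id.mul ih.abs)

lemma hasDerivAt_phi_one (b : ℝ) : HasDerivAt (φ 1) (-1) b := by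
  have : φ 1 = fun b : ℝ => 1 - b := by
    funext x; simp [φ, tent]
  rw [this]
  simpa using (hasDerivAt_id b).const_sub 1

lemma hasDerivAt_phi_succ {n : ℕ} {b L : ℝ} (h : HasDerivAt (φ n) L b) (h0 : φ n b ≠ 0) :
    HasDerivAt (φ (n+1)) (-|φ n b| - b * Real.sign (φ n b) * L) b := by
  have hc : Tendsto (fun x => φ n x) (𝓝 b) (𝓝 (φ n b)) := (phi_cont n).continuousAt
  rcases h0.lt_or_gt with hneg | hpos
  · have hev : ∀ᶠ x in 𝓝 b, φ n x < 0 := hc.eventually (eventually_lt_nhds hneg)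
    have heq : (fun x => 1 - x * (-(φ n x))) =ᶠ[𝓝 b] φ (n+1) := by
      filter_upwards [hev] with x hx
      rw [phi_succ, abs_of_neg hx]
    have hd : HasDerivAt (fun x => 1 - x * (-(φ n x))) (-(1 * (-(φ n b)) + b * (-L))) b :=
      ((hasDerivAt_id b).mul h.neg).const_sub 1
    have := hd.congr_of_eventuallyEq heq.symm
    refine this.congr_deriv ?_
    rw [Real.sign_of_neg hneg, abs_of_neg hneg]; ring
  · have hev : ∀ᶠ x in 𝓝 b, 0 < φ n x := hc.eventually (eventually_gt_nhds hpos)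
    have heq : (fun x => 1 - x * φ n x) =ᶠ[𝓝 b] φ (n+1) := by
      filter_upwards [hev] with x hx
      rw [phi_succ, abs_of_pos hx]
    have hd : HasDerivAt (fun x => 1 - x * φ n x) (-(1 * φ n b + b * L)) b :=
      ((hasDerivAt_id b).mul h).const_sub 1
    have := hd.congr_of_eventuallyEq heq.symm
    refine this.congr_deriv ?_
    rw [Real.sign_of_pos hpos, abs_of_pos hpos]; ring

lemma phi_diffAt {n : ℕ} {b : ℝ} (hz : ∀ j, 1 ≤ j → j < n → φ j b ≠ 0) :
    DifferentiableAt ℝ (φ n) b := by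
  induction n with
  | zero =>
    have : φ 0 = fun _ : ℝ => (1:ℝ) := by funext x; rfl
    rw [this]; exact differentiableAt_const 1
  | succ n ih =>
    rcases Nat.eq_zero_or_pos n with rfl | hn
    · exact (hasDerivAt_phi_one b).differentiableAt
    · have ihd : DifferentiableAt ℝ (φ n) b :=
        ih (fun j h1 h2 => hz j h1 (h2.trans (Nat.lt_succ_self n)))
      have h0 : φ n b ≠ 0 := hz n hn (Nat.lt_succ_self n)
      exact (hasDerivAt_phi_succ ihd.hasDerivAt h0).differentiableAt

lemma deriv_phi_succ {n : ℕ} {b : ℝ} (h : DifferentiableAt ℝ (φ n) b) (h0 : φ n b ≠ 0) :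
    deriv (φ (n+1)) b = -|φ n b| - b * Real.sign (φ n b) * deriv (φ n) b :=
  (hasDerivAt_phi_succ h.hasDerivAt h0).deriv

lemma M_rec {n : ℕ} {b : ℝ} (h : DifferentiableAt ℝ (φ n) b) (h0 : φ n b ≠ 0) :
    b * deriv (φ (n+1)) b + φ (n+1) b
      = φ (n+1) b - b * Real.sign (φ n b) * (b * deriv (φ n) b + φ n b) := by
  rw [deriv_phi_succ h h0]
  have hs : Real.sign (φ n b) * φ n b = |φ n b| := by
    rcases h0.lt_or_gt with hneg | hpos
    · rw [Real.sign_of_neg hneg, abs_of_neg hneg]; ring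
    · rw [Real.sign_of_pos hpos, abs_of_pos hpos]; ring
  linear_combination b * hs

lemma M_rec_abs {n : ℕ} {b : ℝ} (h : DifferentiableAt ℝ (φ n) b) (h0 : φ n b ≠ 0) (hb : 0 ≤ b) :
    b * |b * deriv (φ n) b + φ n b| - |φ (n+1) b|
      ≤ |b * deriv (φ (n+1)) b + φ (n+1) b| := by
  have hs : |Real.sign (φ n b)| = 1 := by
    rcases h0.lt_or_gt with hneg | hpos
    · rw [Real.sign_of_neg hneg]; simp
    · rw [Real.sign_of_pos hpos]; simp
  rw [M_rec h h0]
  have h1 : |b * Real.sign (φ n b) * (b * deriv (φ n) b + φ n b)|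
      = b * |b * deriv (φ n) b + φ n b| := by
    rw [abs_mul, abs_mul, hs, abs_of_nonneg hb]; ring
  calc b * |b * deriv (φ n) b + φ n b| - |φ (n+1) b|
      = |b * Real.sign (φ n b) * (b * deriv (φ n) b + φ n b)| - |φ (n+1) b| := by rw [h1]
    _ ≤ |φ (n+1) b - b * Real.sign (φ n b) * (b * deriv (φ n) b + φ n b)| := by
        rw [abs_sub_comm]
        exact abs_sub_abs_le_abs_sub _ _

lemma phi_zero (b : ℝ) : φ 0 b = 1 := rfl

lemma phi_one (b : ℝ) : φ 1 b = 1 - b := by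
  simp [phi_succ, phi_zero]

lemma abs_phi_le {b : ℝ} (hb : 1 ≤ b) (hb2 : b ≤ 2) (n : ℕ) : |φ n b| ≤ 1 := by
  induction n with
  | zero => simp [phi_zero]
  | succ n ih =>
    rw [phi_succ, abs_le]
    have h0 : 0 ≤ b * |φ n b| := by positivity
    have h2 : b * |φ n b| ≤ 2 := by nlinarith [abs_nonneg (φ n b)]
    constructor <;> nlinarith

lemma div_key {b : ℝ} (hb : 1 < b) : (b/(2*(b-1))) * (2*(b-1)) = b :=
  div_mul_cancel₀ b (by nlinarith)

lemma potential_step {b x : ℝ} (hb : 1 < b) (hb2 : b ≤ 2) (hx : 0 ≤ x) (hx1 : x ≤ 1) :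
    b/(2*(b-1)) - (2-b)/2 * |1 - b*x| + |1 - b*x|
      ≤ b * (b/(2*(b-1)) - (2-b)/2 * x) := by
  have hA := div_key hb
  set A := b/(2*(b-1)) with hAdef
  rcases abs_cases (1 - b*x) with ⟨he, hc⟩ | ⟨he, hc⟩ <;> rw [he] <;>
    nlinarith [mul_nonneg (mul_nonneg (by linarith : (0:ℝ) ≤ b) hx) (by linarith : (0:ℝ) ≤ b - 1),
      mul_nonneg (by linarith : (0:ℝ) ≤ b) hx]

lemma base_potential {b : ℝ} (hb : 1.38 ≤ b) (hb2 : b ≤ 2) {n : ℕ} (hn : 1 ≤ n)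
    (hz : ∀ j, 1 ≤ j → j < n → φ j b ≠ 0) :
    (1/50) * b^n + (b/(2*(b-1)) - (2-b)/2 * |φ n b|)
      ≤ |b * deriv (φ n) b + φ n b| := by
  have hb1 : (1:ℝ) < b := by linarith
  have hA := div_key hb1
  induction n with
  | zero => omega
  | succ n ih =>
    rcases Nat.eq_zero_or_pos n with rfl | hn1
    · rw [(hasDerivAt_phi_one b).deriv]
      have h1 : |φ 1 b| = b - 1 := by rw [phi_one, abs_of_nonpos (by linarith)]; ring
      have h2 : |b * (-1) + φ 1 b| = 2*b - 1 := by
        rw [phi_one, abs_of_nonpos (by linarith)]; ring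
      rw [h2, h1, pow_one]
      nlinarith [sq_nonneg (b - 1.38), sq_nonneg (2 - b)]
    · have hzn : ∀ j, 1 ≤ j → j < n → φ j b ≠ 0 :=
        fun j h1 h2 => hz j h1 (h2.trans (Nat.lt_succ_self n))
      have h0 : φ n b ≠ 0 := hz n hn1 (Nat.lt_succ_self n)
      have IH := ih hn1 hzn
      have hrec := M_rec_abs (phi_diffAt hzn) h0 (by linarith : (0:ℝ) ≤ b)
      have hx : 0 ≤ |φ n b| := abs_nonneg _
      have hx1 : |φ n b| ≤ 1 := abs_phi_le hb1.le hb2 n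
      have hstep := potential_step hb1 hb2 hx hx1
      set y := |φ n b| with hy
      have habs : |φ (n+1) b| = |1 - b * y| := by rw [phi_succ]
      have hmono : b * ((1/50) * b^n + (b/(2*(b-1)) - (2-b)/2 * y))
          ≤ b * |b * deriv (φ n) b + φ n b| :=
        mul_le_mul_of_nonneg_left IH (by linarith)
      rw [habs]
      have hpow : (1/50) * b^(n+1) = b * ((1/50) * b^n) := by ring
      calc (1/50) * b^(n+1) + (b/(2*(b-1)) - (2-b)/2 * |1 - b * y|)
          ≤ b * ((1/50) * b^n + (b/(2*(b-1)) - (2-b)/2 * y)) - |1 - b * y| := by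
            rw [hpow]; linarith
        _ ≤ b * |b * deriv (φ n) b + φ n b| - |1 - b * y| := by linarith
        _ ≤ |b * deriv (φ (n+1)) b + φ (n+1) b| := by rw [habs] at hrec; linarith

lemma base_lower {b : ℝ} (hb : 1.38 ≤ b) (hb2 : b ≤ 2) {n : ℕ} (hn : 1 ≤ n)
    (hz : ∀ j, 1 ≤ j → j < n → φ j b ≠ 0) :
    (1/100) * b^n ≤ |deriv (φ n) b| := by
  have hb1 : (1:ℝ) < b := by linarith
  have hA := div_key hb1
  have hpot := base_potential hb hb2 hn hz
  have hx1 : |φ n b| ≤ 1 := abs_phi_le hb1.le hb2 n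
  have hx : 0 ≤ |φ n b| := abs_nonneg _
  have hdx : (2-b)/2 * |φ n b| + |φ n b| ≤ b/(2*(b-1)) := by
    nlinarith [sq_nonneg (2 - b)]
  have htri : |b * deriv (φ n) b + φ n b| ≤ b * |deriv (φ n) b| + |φ n b| := by
    calc |b * deriv (φ n) b + φ n b| ≤ |b * deriv (φ n) b| + |φ n b| := abs_add_le _ _
      _ = b * |deriv (φ n) b| + |φ n b| := by
          rw [abs_mul, abs_of_nonneg (by linarith : (0:ℝ) ≤ b)]
  have hbL : (1/50) * b^n ≤ b * |deriv (φ n) b| := by linarith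
  have hpow : (0:ℝ) < b^n := pow_pos (by linarith) n
  nlinarith [abs_nonneg (deriv (φ n) b)]

lemma phi_zero' (b : ℝ) : φ 0 b = 1 := rfl

lemma renorm {b : ℝ} (hb : 1 < b) (hb14 : b ≤ 1.4) (k : ℕ) :
    φ (2*k+1) b = (1-b) * φ k (b^2) := by
  have hb2a : (1:ℝ) ≤ b^2 := by nlinarith
  have hb2b : b^2 ≤ 2 := by nlinarith
  induction k with
  | zero => simp [phi_one, phi_zero']
  | succ k ih =>
    have hy : |φ k (b^2)| ≤ 1 := abs_phi_le hb2a hb2b k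
    have h1 : (2*(k+1)+1) = (2*k+2)+1 := by ring
    rw [h1, phi_succ]
    have h2 : (2*k+2) = (2*k+1)+1 := by ring
    rw [h2, phi_succ, ih]
    have habs1 : |(1-b) * φ k (b^2)| = b * |φ k (b^2)| - |φ k (b^2)| := by
      rw [abs_mul, abs_of_nonpos (by linarith : 1-b ≤ 0)]; ring
    rw [habs1]
    have hpos : 0 ≤ 1 - b * (b * |φ k (b^2)| - |φ k (b^2)|) := by
      nlinarith [abs_nonneg (φ k (b^2))]
    rw [abs_of_nonneg hpos, phi_succ]
    have : |φ k (b^2)| = |φ k (b^2)| := rfl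
    ring

lemma phi_even_pos {b : ℝ} (hb : 1 < b) (hb14 : b ≤ 1.4) (k : ℕ) :
    0 < φ (2*k+2) b := by
  have hb2a : (1:ℝ) ≤ b^2 := by nlinarith
  have hb2b : b^2 ≤ 2 := by nlinarith
  have hy : |φ k (b^2)| ≤ 1 := abs_phi_le hb2a hb2b k
  have h2 : (2*k+2) = (2*k+1)+1 := by ring
  rw [h2, phi_succ, renorm hb hb14 k]
  have habs1 : |(1-b) * φ k (b^2)| = (b-1) * |φ k (b^2)| := by
    rw [abs_mul, abs_of_nonpos (by linarith : 1-b ≤ 0)]; ring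
  rw [habs1]
  nlinarith [abs_nonneg (φ k (b^2))]

lemma renorm_deriv {b : ℝ} (hb : 1 < b) (hb14 : b < 1.4) {k : ℕ}
    (hd : DifferentiableAt ℝ (φ k) (b^2)) :
    HasDerivAt (φ (2*k+1)) (-(φ k (b^2)) + (1-b) * (2*b) * deriv (φ k) (b^2)) b := by
  have hsq : HasDerivAt (fun x : ℝ => x^2) (2*b) b := by
    simpa using hasDerivAt_pow 2 b
  have hcomp0 : HasDerivAt ((φ k) ∘ (fun x : ℝ => x^2)) (deriv (φ k) (b^2) * (2*b)) b :=
    HasDerivAt.comp b hd.hasDerivAt hsq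
  have hcomp : HasDerivAt (fun x : ℝ => φ k (x^2)) (deriv (φ k) (b^2) * (2*b)) b := hcomp0
  have hlin : HasDerivAt (fun x : ℝ => 1 - x) (-1) b := by
    simpa using (hasDerivAt_id b).const_sub 1
  have hprod : HasDerivAt (fun x : ℝ => (1-x) * φ k (x^2))
      ((-1) * φ k (b^2) + (1-b) * (deriv (φ k) (b^2) * (2*b))) b := hlin.mul hcomp
  have hev : (fun x : ℝ => (1-x) * φ k (x^2)) =ᶠ[𝓝 b] φ (2*k+1) := by
    filter_upwards [Ioo_mem_nhds hb hb14] with x hx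
    exact (renorm hx.1 hx.2.le k).symm
  have := hprod.congr_of_eventuallyEq hev.symm
  refine this.congr_deriv ?_
  ring

noncomputable def rr (ℓ : ℕ) : ℝ := (1.39:ℝ) ^ ((1:ℝ)/2^ℓ)

lemma rr_zero : rr 0 = 1.39 := by simp [rr]

lemma rr_gt_one (ℓ : ℕ) : 1 < rr ℓ := by
  exact (Real.one_lt_rpow_iff_of_pos (by norm_num)).2 (Or.inl ⟨by norm_num, by positivity⟩)

lemma rr_le (ℓ : ℕ) : rr ℓ ≤ 1.39 := by
  have h1 : ((1:ℝ)/2^ℓ) ≤ 1 := by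
    rw [div_le_one (by positivity)]
    exact one_le_pow₀ (by norm_num)
  calc rr ℓ ≤ (1.39:ℝ) ^ (1:ℝ) := by
        apply Real.rpow_le_rpow_of_exponent_le (by norm_num) h1
    _ = 1.39 := Real.rpow_one _

lemma rr_sq (ℓ : ℕ) : (rr (ℓ+1))^2 = rr ℓ := by
  rw [rr, rr, ← Real.rpow_natCast (_ ^ _) 2, ← Real.rpow_mul (by norm_num)]
  norm_num
  rw [pow_succ]
  congr 1
  ring

lemma abs_lb (x y : ℝ) : |x| - |y| ≤ |x + y| := by
  have := abs_sub_abs_le_abs_sub x (-y)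
  simpa [sub_neg_eq_add] using this

set_option maxHeartbeats 1000000 in
lemma level (ℓ : ℕ) : ∃ c D : ℝ, 0 < c ∧ c ≤ 1/100 ∧ 0 ≤ D ∧
    ∀ b, rr ℓ ≤ b → b ≤ 2 → ∀ n, 1 ≤ n → (∀ j, 1 ≤ j → j < n → φ j b ≠ 0) →
      (c * b^n - D ≤ |deriv (φ n) b| ∧ (φ n b = 0 → deriv (φ n) b ≠ 0)) := by
  induction ℓ with
  | zero =>
    refine ⟨1/100, 0, by norm_num, le_refl _, le_refl _, fun b hb hb2 n hn hz => ?_⟩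
    rw [rr_zero] at hb
    have hlow := base_lower (by linarith) hb2 hn hz
    have hpos : (0:ℝ) < 1/100 * b^n := by positivity
    refine ⟨by linarith, fun _ h => ?_⟩
    rw [h] at hlow; simp at hlow; nlinarith
  | succ ℓ ih =>
    obtain ⟨c', D', hc'pos, hc'le, hD'pos, H⟩ := ih
    have hρ1 : 1 < rr (ℓ+1) := rr_gt_one (ℓ+1)
    have hρ14 : rr (ℓ+1) ≤ 1.39 := rr_le (ℓ+1)
    have hcpos : 0 < min (1/100) ((rr (ℓ+1) - 1) * c') :=
      lt_min (by norm_num) (mul_pos (by linarith) hc'pos)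
    refine ⟨min (1/100) ((rr (ℓ+1) - 1) * c'), 4*D' + 3, hcpos, min_le_left _ _,
      by linarith, ?_⟩
    set c := min (1/100) ((rr (ℓ+1) - 1) * c') with hc
    have hc100 : c ≤ 1/100 := min_le_left _ _
    intro b hb hb2 n hn hz
    rcases le_or_gt 1.39 b with hbig | hsmall
    · -- base region
      have hlow := base_lower (by linarith) hb2 hn hz
      have hbn : (0:ℝ) < b^n := by positivity
      have hcb : c * b^n ≤ 1/100 * b^n := by nlinarith
      refine ⟨by linarith, fun _ h => ?_⟩
      rw [h] at hlow; simp at hlow; nlinarith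
    · -- renormalization region
      have hb1 : (1:ℝ) < b := lt_of_lt_of_le hρ1 hb
      have hb14 : b < 1.4 := by linarith
      have hsq : rr ℓ ≤ b^2 := by
        rw [← rr_sq ℓ]
        exact pow_le_pow_left₀ (by linarith) hb 2
      have hsq2 : b^2 ≤ 2 := by nlinarith
      have hbp : (0:ℝ) < b := by linarith
      have hodd : ∀ k, 2*k+1 ≤ n →
          (c * b^(2*k+1) - (2*D'+1) ≤ |deriv (φ (2*k+1)) b| ∧
            (φ (2*k+1) b = 0 → deriv (φ (2*k+1)) b ≠ 0)) := by
        intro k hkn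
        rcases Nat.eq_zero_or_pos k with rfl | hk1
        · have hd1 : deriv (φ (2*0+1)) b = -1 := (hasDerivAt_phi_one b).deriv
          rw [hd1]
          have hpow : b^(2*0+1) = b := pow_one b
          refine ⟨?_, fun _ => by norm_num⟩
          rw [hpow, abs_neg, abs_one]
          nlinarith
        · have hz' : ∀ i, 1 ≤ i → i < k → φ i (b^2) ≠ 0 := by
            intro i hi1 hik
            have h2i : 2*i+1 < n := by omega
            have hji := hz (2*i+1) (by omega) h2i
            rw [renorm hb1 (by linarith) i] at hji
            intro hzero; rw [hzero, mul_zero] at hji; exact hji rfl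
          have hd' : DifferentiableAt ℝ (φ k) (b^2) := phi_diffAt hz'
          obtain ⟨hlow', hnz'⟩ := H (b^2) hsq hsq2 k hk1 hz'
          have hder := renorm_deriv hb1 hb14 hd'
          rw [hder.deriv]
          set q := φ k (b^2) with hq
          set L := deriv (φ k) (b^2) with hL
          have habs : |q| ≤ 1 := abs_phi_le (by nlinarith) hsq2 k
          have h1 : |(1-b) * (2*b) * L| = (b-1) * (2*b) * |L| := by
            rw [abs_mul, abs_mul, abs_of_nonpos (by linarith : 1-b ≤ 0),
              abs_of_nonneg (by linarith : (0:ℝ) ≤ 2*b)]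
            ring
          have htri : (b-1) * (2*b) * |L| - |q| ≤ |(-q) + (1-b) * (2*b) * L| := by
            have h2 := abs_lb ((1-b) * (2*b) * L) (-q)
            rw [h1, abs_neg] at h2
            calc (b-1) * (2*b) * |L| - |q| ≤ |(1-b) * (2*b) * L + (-q)| := h2
              _ = |(-q) + (1-b) * (2*b) * L| := by rw [add_comm]
          constructor
          · have hmul : (b-1) * (2*b) * (c' * (b^2)^k - D') ≤ (b-1) * (2*b) * |L| :=
              mul_le_mul_of_nonneg_left hlow' (by nlinarith)
            have hpows : (b^2)^k = b^(2*k) := by rw [← pow_mul]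
            have hexp : (b-1) * (2*b) * (c' * (b^2)^k) = 2*(b-1)*c' * b^(2*k+1) := by
              rw [hpows, pow_succ]; ring
            have hble : c ≤ 2*(b-1)*c' := by
              have hmr : c ≤ (rr (ℓ+1) - 1) * c' := min_le_right _ _
              nlinarith
            have hbpow : (0:ℝ) < b^(2*k+1) := by positivity
            have hcb : c * b^(2*k+1) ≤ 2*(b-1)*c' * b^(2*k+1) := by nlinarith
            have hD : (b-1) * (2*b) * D' ≤ 2*D' := by nlinarith
            nlinarith
          · intro hzero
            rw [renorm hb1 (by linarith) k] at hzero
            have hz0 : q = 0 := by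
              rcases mul_eq_zero.1 hzero with h | h
              · exfalso; rw [sub_eq_zero] at h; exact absurd h.symm (by linarith [hb1]; )
              · exact h
            have hnzL := hnz' hz0
            rw [hz0]
            simp only [neg_zero, zero_add]
            intro hcon
            rcases mul_eq_zero.1 hcon with h | h
            · rcases mul_eq_zero.1 h with h' | h'
              · rw [sub_eq_zero] at h'; exact absurd h'.symm (by linarith)
              · linarith
            · exact hnzL h
      obtain ⟨k, hk | hk⟩ := Nat.even_or_odd' n
      · -- n = 2k even, k ≥ 1
        subst hk
        obtain ⟨k', rfl⟩ : ∃ k', k = k' + 1 := ⟨k - 1, by omega⟩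
        have hm : 2*(k'+1) = (2*k'+1) + 1 := by ring
        rw [hm] at hz ⊢
        have hzn : ∀ j, 1 ≤ j → j < 2*k'+1 → φ j b ≠ 0 :=
          fun j h1 h2 => hz j h1 (by omega)
        have h0 : φ (2*k'+1) b ≠ 0 := hz (2*k'+1) (by omega) (by omega)
        have hdn : DifferentiableAt ℝ (φ (2*k'+1)) b := phi_diffAt hzn
        have hds := deriv_phi_succ hdn h0
        obtain ⟨hlowodd, _⟩ := hodd k' (by omega)
        set p := φ (2*k'+1) b with hp
        set L := deriv (φ (2*k'+1)) b with hL
        have hsign : |Real.sign p| = 1 := by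
          rcases h0.lt_or_gt with hneg | hpos
          · rw [Real.sign_of_neg hneg]; simp
          · rw [Real.sign_of_pos hpos]; simp
        have habs : |p| ≤ 1 := abs_phi_le hb1.le hb2 _
        have htri : b * |L| - 1 ≤ |deriv (φ ((2*k'+1)+1)) b| := by
          rw [hds]
          have h1 : |(-(b * Real.sign p * L))| = b * |L| := by
            rw [abs_neg, abs_mul, abs_mul, hsign, abs_of_nonneg hbp.le]; ring
          have h2 := abs_lb (-(b * Real.sign p * L)) (-|p|)
          rw [h1, abs_neg, abs_abs] at h2
          calc b * |L| - 1 ≤ b * |L| - |p| := by linarith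
            _ ≤ |(-(b * Real.sign p * L)) + (-|p|)| := h2
            _ = |(-|p| - b * Real.sign p * L)| := by ring_nf
        constructor
        · have hmul : b * (c * b^(2*k'+1) - (2*D'+1)) ≤ b * |L| :=
            mul_le_mul_of_nonneg_left hlowodd hbp.le
          have hexp : b * (c * b^(2*k'+1)) = c * b^((2*k'+1)+1) := by
            rw [pow_succ]; ring
          nlinarith
        · intro hzero
          exfalso
          have hpos := phi_even_pos hb1 (by linarith) k'
          have he : 2*k'+2 = (2*k'+1)+1 := by ring
          rw [he] at hpos
          rw [hzero] at hpos; exact lt_irrefl 0 hpos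
      · subst hk
        obtain ⟨h1, h2⟩ := hodd k (le_refl _)
        exact ⟨by linarith, h2⟩

/-- global upper bound -/
lemma upper {b : ℝ} (hb : 1 < b) (hb2 : b ≤ 2) {n : ℕ} (hn : 1 ≤ n)
    (hz : ∀ j, 1 ≤ j → j < n → φ j b ≠ 0) :
    |deriv (φ n) b| ≤ (1/(b-1) + 1) * b^n - 1/(b-1) := by
  induction n with
  | zero => omega
  | succ n ih =>
    rcases Nat.eq_zero_or_pos n with rfl | hn1
    · rw [(hasDerivAt_phi_one b).deriv]
      have h1 : (0:ℝ) < b - 1 := by linarith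
      have h2 : (1/(b-1)) * (b - 1) = 1 := by field_simp
      rw [pow_one, abs_neg, abs_one]
      nlinarith
    · have hzn : ∀ j, 1 ≤ j → j < n → φ j b ≠ 0 :=
        fun j h1 h2 => hz j h1 (h2.trans (Nat.lt_succ_self n))
      have h0 : φ n b ≠ 0 := hz n hn1 (Nat.lt_succ_self n)
      have IH := ih hn1 hzn
      rw [deriv_phi_succ (phi_diffAt hzn) h0]
      have hsign : |Real.sign (φ n b)| = 1 := by
        rcases h0.lt_or_gt with hneg | hpos
        · rw [Real.sign_of_neg hneg]; simp
        · rw [Real.sign_of_pos hpos]; simp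
      have habs : |φ n b| ≤ 1 := abs_phi_le hb.le hb2 n
      have htri : |(-|φ n b| - b * Real.sign (φ n b) * deriv (φ n) b)|
          ≤ |φ n b| + b * |deriv (φ n) b| := by
        calc |(-|φ n b| - b * Real.sign (φ n b) * deriv (φ n) b)|
            ≤ |(-|φ n b|)| + |b * Real.sign (φ n b) * deriv (φ n) b| := abs_sub _ _
          _ = |φ n b| + b * |deriv (φ n) b| := by
              rw [abs_neg, abs_abs, abs_mul, abs_mul, hsign, abs_of_nonneg (by linarith : (0:ℝ) ≤ b)]
              ring
      have h1 : (0:ℝ) < b - 1 := by linarith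
      have h2 : (1/(b-1)) * (b - 1) = 1 := by field_simp
      have hpow : (0:ℝ) < b^n := by positivity
      have hmul : b * |deriv (φ n) b| ≤ b * ((1/(b-1) + 1) * b^n - 1/(b-1)) :=
        mul_le_mul_of_nonneg_left IH (by linarith)
      have hexp : b * ((1/(b-1) + 1) * b^n) = (1/(b-1) + 1) * b^(n+1) := by
        rw [pow_succ]; ring
      nlinarith

/-- one-sided derivative of |f| at a zero of f, from the right -/
lemma absDeriv_right {f : ℝ → ℝ} {b L : ℝ} (hf : HasDerivWithinAt f L (Ici b) b)
    (h0 : f b = 0) : HasDerivWithinAt (fun x => |f x|) |L| (Ici b) b := by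
  rw [hasDerivWithinAt_iff_tendsto_slope] at hf ⊢
  rw [Ici_sdiff_left] at hf ⊢
  have habs : Tendsto (fun x => |slope f b x|) (𝓝[Ioi b] b) (𝓝 |L|) :=
    (continuous_abs.tendsto L).comp hf
  apply habs.congr'
  filter_upwards [self_mem_nhdsWithin] with x hx
  have hxb : 0 < x - b := by simpa [sub_pos] using hx
  rw [slope_def_field, slope_def_field, h0, sub_zero, abs_zero, sub_zero,
    abs_div, abs_of_pos hxb]

/-- one-sided derivative of |f| at a zero of f, from the left -/
lemma absDeriv_left {f : ℝ → ℝ} {b L : ℝ} (hf : HasDerivWithinAt f L (Iic b) b)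
    (h0 : f b = 0) : HasDerivWithinAt (fun x => |f x|) (-|L|) (Iic b) b := by
  rw [hasDerivWithinAt_iff_tendsto_slope] at hf ⊢
  rw [Iic_diff_right] at hf ⊢
  have habs : Tendsto (fun x => -|slope f b x|) (𝓝[Iio b] b) (𝓝 (-|L|)) :=
    ((continuous_abs.tendsto L).comp hf).neg
  apply habs.congr'
  filter_upwards [self_mem_nhdsWithin] with x hx
  have hxb : x - b < 0 := by simpa [sub_neg] using hx
  rw [slope_def_field, slope_def_field, h0, sub_zero, abs_zero, sub_zero,
    abs_div, abs_of_neg hxb]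
  have h2 : b - x ≠ 0 := by linarith [hxb]
  have h3 : x - b ≠ 0 := by linarith [hxb]
  field_simp

/-- tent step for one-sided derivatives, via derivative of |φ n| -/
lemma tent_oneside {n : ℕ} {b A : ℝ} {s : Set ℝ}
    (hg : HasDerivWithinAt (fun x => |φ n x|) A s b) :
    HasDerivWithinAt (φ (n+1)) (-|φ n b| - b * A) s b := by
  have heq : φ (n+1) = fun x => 1 - x * |φ n x| := by
    funext x; exact phi_succ n x
  rw [heq]
  have := ((hasDerivWithinAt_id b s).mul hg).const_sub 1
  refine this.congr_deriv ?_
  simp only [id]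
  ring

/-- one-sided derivative of |φ n| when φ n b ≠ 0 -/
lemma abs_oneside_ne {n : ℕ} {b L : ℝ} {s : Set ℝ} (h : HasDerivWithinAt (φ n) L s b)
    (h0 : φ n b ≠ 0) :
    HasDerivWithinAt (fun x => |φ n x|) (Real.sign (φ n b) * L) s b := by
  have hc : Tendsto (fun x => φ n x) (𝓝 b) (𝓝 (φ n b)) := (phi_cont n).continuousAt
  rcases h0.lt_or_gt with hneg | hpos
  · have hev : ∀ᶠ x in 𝓝 b, φ n x < 0 := hc.eventually (eventually_lt_nhds hneg)
    have hev' : (fun x => |φ n x|) =ᶠ[𝓝[s] b] (fun x => -φ n x) := by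
      filter_upwards [nhdsWithin_le_nhds hev] with x hx
      rw [abs_of_neg hx]
    have := (h.neg).congr_of_eventuallyEq hev' (by rw [abs_of_neg hneg]; rfl)
    rw [Real.sign_of_neg hneg]
    refine this.congr_deriv ?_; ring
  · have hev : ∀ᶠ x in 𝓝 b, 0 < φ n x := hc.eventually (eventually_gt_nhds hpos)
    have hev' : (fun x => |φ n x|) =ᶠ[𝓝[s] b] (fun x => φ n x) := by
      filter_upwards [nhdsWithin_le_nhds hev] with x hx
      rw [abs_of_pos hx]
    have := h.congr_of_eventuallyEq hev' (by rw [abs_of_pos hpos])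
    rw [Real.sign_of_pos hpos]
    refine this.congr_deriv ?_; ring

/-- kink propagation -/
lemma kink {j : ℕ} {b : ℝ} (hb : 1 < b) (hz : ∀ i, 1 ≤ i → i < j → φ i b ≠ 0)
    (h0 : φ j b = 0) (hL : deriv (φ j) b ≠ 0) :
    ∀ m, j < m → ∃ Lp Lm, HasDerivWithinAt (φ m) Lp (Ici b) b ∧
      HasDerivWithinAt (φ m) Lm (Iic b) b ∧ 0 < |Lp - Lm| := by
  intro m hm
  induction m with
  | zero => omega
  | succ m ih =>
    rcases Nat.lt_or_ge j m with hjm | hjm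
    · obtain ⟨Lp, Lm, hp, hm', hgap⟩ := ih hjm
      have h0m : φ m b = 0 ∨ φ m b ≠ 0 := em _
      rcases h0m with hzero | hne
      · refine ⟨-|φ m b| - b * |Lp|, -|φ m b| - b * (-|Lm|),
          tent_oneside (absDeriv_right hp hzero), tent_oneside (absDeriv_left hm' hzero), ?_⟩
        have : |(-|φ m b| - b * |Lp|) - (-|φ m b| - b * (-|Lm|))| = b * (|Lp| + |Lm|) := by
          rw [show (-|φ m b| - b * |Lp|) - (-|φ m b| - b * (-|Lm|)) = -(b * (|Lp| + |Lm|)) by ring,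
            abs_neg, abs_of_nonneg (by positivity)]
        rw [this]
        have h2 : |Lp - Lm| ≤ |Lp| + |Lm| := abs_sub _ _
        nlinarith
      · refine ⟨-|φ m b| - b * (Real.sign (φ m b) * Lp), -|φ m b| - b * (Real.sign (φ m b) * Lm),
          tent_oneside (abs_oneside_ne hp hne), tent_oneside (abs_oneside_ne hm' hne), ?_⟩
        have hsign : |Real.sign (φ m b)| = 1 := by
          rcases hne.lt_or_gt with hneg | hpos
          · rw [Real.sign_of_neg hneg]; simp
          · rw [Real.sign_of_pos hpos]; simp
        have : |(-|φ m b| - b * (Real.sign (φ m b) * Lp)) - (-|φ m b| - b * (Real.sign (φ m b) * Lm))|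
            = b * |Lp - Lm| := by
          rw [show (-|φ m b| - b * (Real.sign (φ m b) * Lp)) - (-|φ m b| - b * (Real.sign (φ m b) * Lm))
              = -(b * (Real.sign (φ m b) * (Lp - Lm))) by ring, abs_neg, abs_mul, abs_mul, hsign,
            one_mul, abs_of_nonneg (by linarith : (0:ℝ) ≤ b)]
        rw [this]
        nlinarith
    · -- m = j : base case
      have hmj : m = j := by omega
      subst hmj
      have hd : HasDerivAt (φ m) (deriv (φ m) b) b := (phi_diffAt hz).hasDerivAt
      refine ⟨-|φ m b| - b * |deriv (φ m) b|, -|φ m b| - b * (-|deriv (φ m) b|),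
        tent_oneside (absDeriv_right hd.hasDerivWithinAt h0),
        tent_oneside (absDeriv_left hd.hasDerivWithinAt h0), ?_⟩
      have habsL : 0 < |deriv (φ m) b| := abs_pos.2 hL
      have : |(-|φ m b| - b * |deriv (φ m) b|) - (-|φ m b| - b * (-|deriv (φ m) b|))|
          = 2 * b * |deriv (φ m) b| := by
        rw [show (-|φ m b| - b * |deriv (φ m) b|) - (-|φ m b| - b * (-|deriv (φ m) b|))
            = -(2 * b * |deriv (φ m) b|) by ring, abs_neg, abs_of_nonneg (by positivity)]
      rw [this]
      positivity

lemma not_diff_of_kink {j n : ℕ} {b : ℝ} (hb : 1 < b)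
    (hz : ∀ i, 1 ≤ i → i < j → φ i b ≠ 0) (h0 : φ j b = 0)
    (hL : deriv (φ j) b ≠ 0) (hn : j < n) : ¬ DifferentiableAt ℝ (φ n) b := by
  obtain ⟨Lp, Lm, hp, hm, hgap⟩ := kink hb hz h0 hL n hn
  intro hdiff
  have hu1 : Lp = deriv (φ n) b :=
    (uniqueDiffOn_Ici b b self_mem_Ici).eq_deriv _ hp hdiff.hasDerivAt.hasDerivWithinAt
  have hu2 : Lm = deriv (φ n) b :=
    (uniqueDiffOn_Iic b b self_mem_Iic).eq_deriv _ hm hdiff.hasDerivAt.hasDerivWithinAt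
  rw [hu1, hu2, sub_self, abs_zero] at hgap
  exact lt_irrefl 0 hgap

lemma rr_exists {bs : ℝ} (hbs : 1 < bs) : ∃ ℓ : ℕ, rr ℓ ≤ bs := by
  have hlogbs : 0 < Real.log bs := Real.log_pos hbs
  have hlog139 : 0 < Real.log 1.39 := Real.log_pos (by norm_num)
  obtain ⟨ℓ, hℓ⟩ := pow_unbounded_of_one_lt (Real.log 1.39 / Real.log bs) (by norm_num : (1:ℝ) < 2)
  refine ⟨ℓ, ?_⟩
  have h2 : (0:ℝ) < 2^ℓ := by positivity
  have hle : (1/2^ℓ) * Real.log 1.39 ≤ Real.log bs := by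
    rw [div_lt_iff₀ hlogbs] at hℓ
    rw [div_mul_eq_mul_div, div_le_iff₀ h2]
    nlinarith
  calc rr ℓ = Real.exp ((1/2^ℓ) * Real.log 1.39) := by
        rw [rr, Real.rpow_def_of_pos (by norm_num)]; ring_nf
    _ ≤ Real.exp (Real.log bs) := Real.exp_le_exp.2 hle
    _ = bs := Real.exp_log (by linarith)

set_option maxHeartbeats 1000000 in
/-- Lemma (Brucks–Misiurewicz type estimate): given `b_* > 1`, there are constants
`C ≥ 1` and `N ≥ 1` such that for `n ≥ N`: (i) for `b ∈ [b_*, 2]`, `φ_n` is differentiable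
at `b` unless `φ_j(b) = 0` for some `1 ≤ j < n`; and (ii) if `V ⊆ [b_*, 2]` is an interval
on which `φ_n` is differentiable, then `C⁻¹·b₀ⁿ ≤ |φ_n'(b)| ≤ C·b₀ⁿ` for all `b, b₀ ∈ V`. -/
theorem tent_iterate_derivative_estimate (bs : ℝ) (hbs : 1 < bs) :
    ∃ C : ℝ, 1 ≤ C ∧ ∃ N : ℕ, 1 ≤ N ∧ ∀ n : ℕ, N ≤ n →
      (∀ b ∈ Set.Icc bs 2, (∀ j, 1 ≤ j → j < n → φ j b ≠ 0) →
        DifferentiableAt ℝ (φ n) b) ∧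
      (∀ V : Set ℝ, V ⊆ Set.Icc bs 2 → V.OrdConnected →
        (∀ b ∈ V, DifferentiableAt ℝ (φ n) b) →
        ∀ b ∈ V, ∀ b₀ ∈ V,
          C⁻¹ * b₀ ^ n ≤ |deriv (φ n) b| ∧ |deriv (φ n) b| ≤ C * b₀ ^ n) := by
  obtain ⟨ℓ, hℓ⟩ := rr_exists hbs
  obtain ⟨c, D, hc, hc100, hD, HL⟩ := level ℓ
  set Ku : ℝ := 1/(bs-1) + 1 with hKu
  have hKu1 : 1 ≤ Ku := by
    have h9 : 0 < 1/(bs-1) := one_div_pos.2 (by linarith)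
    rw [hKu]; linarith
  obtain ⟨N₀, hN₀⟩ := pow_unbounded_of_one_lt (2*D/c) hbs
  set N := N₀ + 1 with hN
  set R := Real.exp (4/(c*(bs-1)*bs)) with hR
  have hRpos : 0 < R := Real.exp_pos _
  have hR1 : 1 ≤ R := by
    have h0 : (0:ℝ) ≤ 4/(c*(bs-1)*bs) :=
      le_of_lt (div_pos (by norm_num) (mul_pos (mul_pos hc (by linarith)) (by linarith)))
    have := Real.add_one_le_exp (4/(c*(bs-1)*bs))
    linarith
  set C := R * max Ku (2/c) with hC
  have hmaxKu : Ku ≤ max Ku (2/c) := le_max_left _ _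
  have hmax2c : 2/c ≤ max Ku (2/c) := le_max_right _ _
  have hC1 : 1 ≤ C := by
    calc (1:ℝ) = 1 * 1 := by ring
      _ ≤ R * max Ku (2/c) := by
          apply mul_le_mul hR1 (le_trans hKu1 hmaxKu) (by norm_num) hRpos.le
  have hCpos : 0 < C := by linarith
  refine ⟨C, hC1, N, by omega, fun n hn => ⟨fun b _ hz => phi_diffAt hz, ?_⟩⟩
  intro V hV hVord hVdiff b hbV b₀ hb₀V
  have hn1 : 1 ≤ n := by omega
  -- zero-freeness on V
  have hzf : ∀ x, x ∈ V → ∀ j, 1 ≤ j → j < n → φ j x ≠ 0 := by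
    intro x hxV
    by_contra hcon
    push_neg at hcon
    obtain ⟨j, hj1, hjn, hj0⟩ := hcon
    have hx1 : bs ≤ x := (hV hxV).1
    have hx2 : x ≤ 2 := (hV hxV).2
    have hx1' : (1:ℝ) < x := lt_of_lt_of_le hbs hx1
    have hP : ∃ j, 1 ≤ j ∧ j < n ∧ φ j x = 0 := ⟨j, hj1, hjn, hj0⟩
    classical
    set j₀ := Nat.find hP with hj₀
    obtain ⟨hj₀1, hj₀n, hj₀0⟩ := Nat.find_spec hP
    have hzf0 : ∀ i, 1 ≤ i → i < j₀ → φ i x ≠ 0 := by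
      intro i hi1 hij₀ h0i
      exact Nat.find_min hP hij₀ ⟨hi1, by omega, h0i⟩
    have hder : deriv (φ j₀) x ≠ 0 :=
      (HL x (le_trans hℓ hx1) hx2 j₀ hj₀1 hzf0).2 hj₀0
    exact not_diff_of_kink hx1' hzf0 hj₀0 hder hj₀n (hVdiff x hxV)
  -- pointwise two-sided bounds on V
  have hDc : D ≤ (c/2) * bs^n := by
    have h1 : 2*D/c < bs^N₀ := hN₀
    have h2 : bs^N₀ ≤ bs^n := pow_le_pow_right₀ (by linarith) (by omega)
    rw [div_lt_iff₀ hc] at h1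
    nlinarith
  have key : ∀ x, x ∈ V → (c/2) * x^n ≤ |deriv (φ n) x| ∧ |deriv (φ n) x| ≤ Ku * x^n := by
    intro x hxV
    have hx1 : bs ≤ x := (hV hxV).1
    have hx2 : x ≤ 2 := (hV hxV).2
    have hx1' : (1:ℝ) < x := lt_of_lt_of_le hbs hx1
    have hxpow : bs^n ≤ x^n := pow_le_pow_left₀ (by linarith) hx1 n
    constructor
    · have hlow := (HL x (le_trans hℓ hx1) hx2 n hn1 (hzf x hxV)).1
      nlinarith
    · have hup := upper hx1' hx2 hn1 (hzf x hxV)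
      have h1 : 1/(x-1) ≤ 1/(bs-1) := by
        apply one_div_le_one_div_of_le (by linarith) (by linarith)
      have hxn : (0:ℝ) < x^n := by positivity
      have h2 : (0:ℝ) < 1/(x-1) := one_div_pos.2 (by linarith)
      rw [hKu]
      nlinarith [mul_nonneg (by linarith : (0:ℝ) ≤ 1/(bs-1) - 1/(x-1)) hxn.le]
  -- comparison of powers on V
  have hcomp : ∀ x, x ∈ V → ∀ y, y ∈ V → x^n ≤ R * y^n := by
    intro x hxV y hyV
    have hx1 : bs ≤ x := (hV hxV).1
    have hx2 : x ≤ 2 := (hV hxV).2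
    have hy1 : bs ≤ y := (hV hyV).1
    have hy2 : y ≤ 2 := (hV hyV).2
    have hxn : (0:ℝ) ≤ x^n := pow_nonneg (by linarith) n
    have hyn : (0:ℝ) < y^n := pow_pos (by linarith) n
    rcases le_or_gt x y with hxy | hyx
    · have hle : x^n ≤ y^n := pow_le_pow_left₀ (by linarith) hxy n
      have := mul_le_mul_of_nonneg_right hR1 hyn.le
      linarith
    · -- y < x : mean value theorem
      have hIcc : Icc y x ⊆ V := hVord.out hyV hxV
      obtain ⟨ξ, hξ, hξeq⟩ := exists_hasDerivAt_eq_slope (φ n) (fun t => deriv (φ n) t) hyx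
        ((phi_cont n).continuousOn)
        (fun t ht => (hVdiff t (hIcc (Ioo_subset_Icc_self ht))).hasDerivAt)
      have hξV : ξ ∈ V := hIcc (Ioo_subset_Icc_self hξ)
      have hξ1 : bs ≤ ξ := (hV hξV).1
      have hξlow : (c/2) * bs^n ≤ |deriv (φ n) ξ| := by
        have h1 := (key ξ hξV).1
        have h2 : bs^n ≤ ξ^n := pow_le_pow_left₀ (by linarith) hξ1 n
        linarith [mul_le_mul_of_nonneg_left h2 (by linarith : (0:ℝ) ≤ c/2)]
      have hnum : |φ n x - φ n y| ≤ 2 := by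
        have h1 : |φ n x| ≤ 1 := abs_phi_le (by linarith) hx2 n
        have h2 : |φ n y| ≤ 1 := abs_phi_le (by linarith) hy2 n
        calc |φ n x - φ n y| ≤ |φ n x| + |φ n y| := abs_sub _ _
          _ ≤ 2 := by linarith
      have hbsn : (0:ℝ) < bs^n := pow_pos (by linarith) n
      have hdist : x - y ≤ 4/(c * bs^n) := by
        have heq2 : |deriv (φ n) ξ| * (x - y) = |φ n x - φ n y| := by
          rw [hξeq, abs_div, abs_of_pos (by linarith : (0:ℝ) < x - y)]
          field_simp
        rw [le_div_iff₀ (mul_pos hc hbsn)]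
        nlinarith [mul_le_mul_of_nonneg_right hξlow (le_of_lt (sub_pos.2 hyx))]
      -- now x ≤ y + ε with ε = 4/(c bs^n)
      set ε := 4/(c * bs^n) with hε
      have hεpos : 0 ≤ ε := by positivity
      have h1 : x ≤ y * (1 + ε/bs) := by
        have hb0 : (0:ℝ) < bs := by linarith
        have key2 : ε * bs ≤ y * ε := by nlinarith
        have hiden : y * (1 + ε/bs) - (y + ε) = (y*ε - ε*bs)/bs := by
          field_simp; ring
        nlinarith [div_nonneg (by linarith : (0:ℝ) ≤ y*ε - ε*bs) hb0.le]
      have h2 : x^n ≤ (y * (1 + ε/bs))^n :=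
        pow_le_pow_left₀ (by linarith) h1 n
      have h3 : (y * (1 + ε/bs))^n = y^n * (1 + ε/bs)^n := mul_pow _ _ _
      have h4 : (1 + ε/bs)^n ≤ Real.exp (n * (ε/bs)) := by
        calc (1 + ε/bs)^n ≤ (Real.exp (ε/bs))^n := by
              apply pow_le_pow_left₀ (by positivity)
              linarith [Real.add_one_le_exp (ε/bs)]
          _ = Real.exp (n * (ε/bs)) := by rw [← Real.exp_nat_mul]
      have h5 : (n:ℝ) * (ε/bs) ≤ 4/(c*(bs-1)*bs) := by
        -- n * (4/(c bs^n))/bs ≤ 4/(c(bs-1)bs)  ⟺  n(bs-1) ≤ bs^n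
        have hbern : 1 + (n:ℝ)*(bs-1) ≤ bs^n := by
          have hh := one_add_mul_le_pow (by linarith : (-2:ℝ) ≤ bs - 1) n
          have he : (1:ℝ) + (bs-1) = bs := by ring
          rw [he] at hh
          exact hh
        have hn0 : (0:ℝ) ≤ n := Nat.cast_nonneg n
        have hcbs : c * bs^n ≠ 0 := ne_of_gt (mul_pos hc hbsn)
        have hbs0 : bs ≠ 0 := by linarith
        have e1 : (n:ℝ) * (ε/bs) = 4*n/(c*bs^n*bs) := by
          rw [hε]; field_simp
        have hp1 : (0:ℝ) < c*bs^n*bs := mul_pos (mul_pos hc hbsn) (by linarith)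
        have hp2 : (0:ℝ) < c*(bs-1)*bs := mul_pos (mul_pos hc (by linarith)) (by linarith)
        have hp3 : (0:ℝ) ≤ 4*c*bs := by nlinarith
        rw [e1, div_le_div_iff₀ hp1 hp2]
        nlinarith [mul_le_mul_of_nonneg_left (by linarith : (n:ℝ)*(bs-1) ≤ bs^n) hp3]
      have h6 : Real.exp ((n:ℝ) * (ε/bs)) ≤ R := Real.exp_le_exp.2 h5
      calc x^n ≤ y^n * (1 + ε/bs)^n := by rw [← h3]; exact h2
        _ ≤ y^n * R := by
            have h7 := mul_le_mul_of_nonneg_left (h4.trans h6) hyn.le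
            linarith
        _ = R * y^n := by ring
  -- conclude
  have hb1 : bs ≤ b := (hV hbV).1
  have hlowb := (key b hbV).1
  have hupb := (key b hbV).2
  have hcomp1 := hcomp b hbV b₀ hb₀V
  have hcomp2 := hcomp b₀ hb₀V b hbV
  have hbn : (0:ℝ) < b^n := pow_pos (by linarith) n
  have hb₀1 : bs ≤ b₀ := (hV hb₀V).1
  have hb₀n : (0:ℝ) < b₀^n := pow_pos (by linarith) n
  have h2R : (0:ℝ) < 2*R := by linarith
  constructor
  · have hCinv : C⁻¹ ≤ c/(2*R) := by
      rw [inv_le_comm₀ hCpos (div_pos hc h2R)]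
      calc (c/(2*R))⁻¹ = 2*R/c := by rw [← one_div, one_div_div]
        _ = R * (2/c) := by ring
        _ ≤ C := by
            rw [hC]
            exact mul_le_mul_of_nonneg_left hmax2c hRpos.le
    have step1 : C⁻¹ * b₀^n ≤ (c/(2*R)) * b₀^n :=
      mul_le_mul_of_nonneg_right hCinv hb₀n.le
    have step2 : (c/(2*R)) * b₀^n ≤ (c/2) * b^n := by
      have hmul := mul_le_mul_of_nonneg_left hcomp2 (le_of_lt (div_pos hc h2R))
      have he : c/(2*R) * (R*b^n) = (c/2) * b^n := by
        field_simp
      linarith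
    linarith
  · have step1 : |deriv (φ n) b| ≤ Ku * b^n := hupb
    have step2 : Ku * b^n ≤ Ku * (R * b₀^n) :=
      mul_le_mul_of_nonneg_left hcomp1 (by linarith)
    have step3 : Ku * (R * b₀^n) ≤ C * b₀^n := by
      rw [hC]
      have h7 := mul_le_mul_of_nonneg_right (mul_le_mul_of_nonneg_left hmaxKu hRpos.le) hb₀n.le
      nlinarith
    linarith
end

section
/- Let T_b(x) = 1 − b|x| with b ∈ (1,2]. If T_b^k(0) = 0 for some k ≥ 1, then b^k ≥ 2√2. -/
open Set

lemma tent_even_iter (b : ℝ) (hb1 : 1 < b) (hb2 : b ^ 2 ≤ 2) (j : ℕ) :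
    (tent b)^[2 * j] 0 = (1 - b) * (tent (b ^ 2))^[j] 0 ∧
      |(tent b)^[2 * j] 0| ≤ 1 / (1 + b) := by
  have hb0 : (0:ℝ) < 1 + b := by linarith
  induction j with
  | zero =>
    constructor
    · simp
    · simp; positivity
  | succ j ih =>
    obtain ⟨h1, h2⟩ := ih
    set x := (tent b)^[2 * j] 0 with hx
    set y := (tent (b ^ 2))^[j] 0 with hy
    have hxb : b * |x| ≤ b / (1 + b) := by
      rw [div_eq_mul_inv, mul_comm b]
      have : |x| ≤ (1 + b)⁻¹ := by rw [← one_div]; exact h2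
      nlinarith [abs_nonneg x]
    have hpos : 0 < 1 - b * |x| := by
      have : b / (1 + b) < 1 := (div_lt_one hb0).mpr (by linarith)
      linarith
    have step1 : (tent b)^[2 * j + 1] 0 = 1 - b * |x| := by
      rw [Function.iterate_succ_apply', ← hx]; rfl
    have step2 : (tent b)^[2 * (j + 1)] 0 = 1 - b + b ^ 2 * |x| := by
      have h21 : 2 * (j + 1) = (2 * j + 1) + 1 := by ring
      rw [h21, Function.iterate_succ_apply', step1]
      show 1 - b * abs (1 - b * |x|) = 1 - b + b ^ 2 * |x|
      rw [abs_of_pos hpos]; ring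
    have hax : |x| = (b - 1) * |y| := by
      rw [h1, abs_mul, abs_of_neg (show (1:ℝ) - b < 0 by linarith)]; ring
    have hxub : |x| * (1 + b) ≤ 1 := by
      rw [← le_div_iff₀ hb0]; exact h2
    have hp : (1 / (1 + b)) * (1 + b) = 1 := by field_simp
    refine ⟨?_, ?_⟩
    · rw [step2, hax, Function.iterate_succ_apply', ← hy]
      show 1 - b + b ^ 2 * ((b - 1) * |y|) = (1 - b) * tent (b ^ 2) y
      show 1 - b + b ^ 2 * ((b - 1) * |y|) = (1 - b) * (1 - b ^ 2 * |y|)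
      ring
    · rw [step2, abs_le]
      constructor
      · nlinarith [abs_nonneg x]
      · nlinarith [abs_nonneg x, mul_le_mul_of_nonneg_right h2 (le_of_lt hb0)]

lemma tent_odd_iter_pos (b : ℝ) (hb1 : 1 < b) (hb2 : b ^ 2 ≤ 2) (j : ℕ) :
    0 < (tent b)^[2 * j + 1] 0 := by
  have hb0 : (0:ℝ) < 1 + b := by linarith
  obtain ⟨-, h2⟩ := tent_even_iter b hb1 hb2 j
  set x := (tent b)^[2 * j] 0 with hx
  have step1 : (tent b)^[2 * j + 1] 0 = 1 - b * |x| := by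
    rw [Function.iterate_succ_apply', ← hx]; rfl
  rw [step1]
  have : |x| ≤ 1 / (1 + b) := h2
  have hxb : b * |x| ≤ b / (1 + b) := by
    rw [div_eq_mul_inv, mul_comm b]
    rw [← one_div] at *
    nlinarith [abs_nonneg x]
  have : b / (1 + b) < 1 := (div_lt_one hb0).mpr (by linarith)
  linarith

lemma tent_main : ∀ k : ℕ, 1 ≤ k → ∀ b : ℝ, b ∈ Set.Ioc (1 : ℝ) 2 →
    (tent b)^[k] 0 = 0 → 2 * Real.sqrt 2 ≤ b ^ k := by
  intro k
  induction k using Nat.strong_induction_on with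
  | _ k ih =>
    intro hk b hb hper
    obtain ⟨hb1, hb2⟩ := hb
    have hs2 : Real.sqrt 2 ^ 2 = 2 := Real.sq_sqrt (by norm_num)
    have hs2n : 0 ≤ Real.sqrt 2 := Real.sqrt_nonneg 2
    have hs21 : (1:ℝ) ≤ Real.sqrt 2 := by nlinarith
    by_cases hsb : Real.sqrt 2 ≤ b
    · -- b ≥ √2 : show k ≥ 3
      have hk1 : k ≠ 1 := by
        rintro rfl
        simp only [Function.iterate_one, tent, abs_zero, mul_zero, sub_zero] at hper
        norm_num at hper
      have hk2 : k ≠ 2 := by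
        rintro rfl
        have e1 : (tent b)^[2] 0 = 1 - b := by
          show tent b (tent b 0) = 1 - b
          simp [tent]
        rw [e1] at hper
        linarith
      have hk3 : 3 ≤ k := by omega
      calc 2 * Real.sqrt 2 = Real.sqrt 2 ^ 3 := by
            rw [pow_succ, hs2]
          _ ≤ Real.sqrt 2 ^ k := pow_le_pow_right₀ hs21 hk3
          _ ≤ b ^ k := pow_le_pow_left₀ hs2n hsb k
    · push_neg at hsb
      have hbsq : b ^ 2 ≤ 2 := by nlinarith
      rcases Nat.even_or_odd k with he | ho
      · obtain ⟨j, hj⟩ := he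
        have hj2 : k = 2 * j := by omega
        have hj1 : 1 ≤ j := by omega
        obtain ⟨heq, -⟩ := tent_even_iter b hb1 hbsq j
        rw [hj2] at hper
        rw [hper] at heq
        have hy : (tent (b ^ 2))^[j] 0 = 0 := by
          rcases mul_eq_zero.mp heq.symm with h | h
          · exfalso; linarith
          · exact h
        have hb21 : (1:ℝ) < b ^ 2 := by nlinarith
        have ihj := ih j (by omega) hj1 (b ^ 2) ⟨hb21, hbsq⟩ hy
        calc 2 * Real.sqrt 2 ≤ (b ^ 2) ^ j := ihj
          _ = b ^ k := by rw [← pow_mul, hj2]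
      · obtain ⟨j, hj⟩ := ho
        have := tent_odd_iter_pos b hb1 hbsq j
        rw [← hj, hper] at this
        linarith

/-- Lemma: if `T_b^k(0) = 0` for some `k ≥ 1` and `b ∈ (1,2]`, then `b^k ≥ 2√2`. -/
theorem tent_periodic_critical_point_slope_bound (b : ℝ) (hb : b ∈ Set.Ioc (1 : ℝ) 2)
    (k : ℕ) (hk : 1 ≤ k) (hper : (tent b)^[k] 0 = 0) :
    2 * Real.sqrt 2 ≤ b ^ k := by
  exact tent_main k hk b hb hper
end

section
/- Let b₀ ∈ (1,2] and suppose the turning point 0 is preperiodic under T_{b₀}: let N ≥ 0 and k ≥ 1 be minimal with T_{b₀}^{N+k}(0) = T_{b₀}^N(0), and set α := T_{b₀}^N(0). Then there exist constants C₁ ≥ 1 and l ≥ 1, an open neighbourhood U_α of α, and ε > 0 such that for every b ∈ (1,2] with |b − b₀| < ε the following holds: if n ≥ 1 and T_b^{N+jk}(0) ∈ U_α for all j = 1, …, n, then |log b₀ − log b| ≤ C₁ · b₀^{−nk/l}. -/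
open Set Polynomial

lemma tent_def (b x : ℝ) : tent b x = 1 - b * |x| := rfl

lemma tentIterCont (m : ℕ) : Continuous fun b : ℝ => (tent b)^[m] 0 := by
  induction m with
  | zero => simpa using continuous_const
  | succ m ih =>
    have : (fun b : ℝ => (tent b)^[m+1] 0) = fun b : ℝ => 1 - b * |(tent b)^[m] 0| := by
      funext b
      rw [Function.iterate_succ_apply']
      rfl
    rw [this]
    exact continuous_const.sub (continuous_id.mul ih.abs)

lemma abs_eq_sign_mul {a y : ℝ} (ha : a ≠ 0) (hy : |y - a| < |a|) :
    |y| = (if a < 0 then (-1:ℝ) else 1) * y := by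
  rcases lt_or_gt_of_ne ha with h | h
  · have hy0 : y < 0 := by
      have := abs_lt.1 hy
      have := this.2
      have : y < a + |a| := by linarith [this]
      rwa [abs_of_neg h, add_neg_cancel] at this
    rw [if_pos h, abs_of_neg hy0]
    ring
  · have hy0 : 0 < y := by
      have := (abs_lt.1 hy).1
      have : a - |a| < y := by linarith
      rwa [abs_of_pos h, sub_self] at this
    rw [if_neg (not_lt.2 h.le), abs_of_pos hy0, one_mul]

lemma lemA (b₀ : ℝ) : ∀ (r : ℕ) (a : ℝ), (∀ i, i < r → (tent b₀)^[i] a ≠ 0) →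
    ∃ δ ε : ℝ, 0 < δ ∧ 0 < ε ∧ ∃ Λ : ℝ → ℝ, (∀ b, |Λ b| = |b| ^ r) ∧
      ∀ b : ℝ, |b - b₀| < ε → ∀ y y' : ℝ, |y - a| < δ → |y' - a| < δ →
        (tent b)^[r] y - (tent b)^[r] y' = Λ b * (y - y') := by
  intro r
  induction r with
  | zero =>
    intro a _
    exact ⟨1, 1, one_pos, one_pos, fun _ => 1, by simp, by intro b _ y y' _ _; simp⟩
  | succ r ih =>
    intro a ha
    have ha0 : a ≠ 0 := by simpa using ha 0 (Nat.succ_pos r)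
    set a' := tent b₀ a with ha'
    have ha' : ∀ i, i < r → (tent b₀)^[i] a' ≠ 0 := by
      intro i hi
      have := ha (i+1) (by omega)
      rwa [Function.iterate_succ_apply] at this
    obtain ⟨δ', ε', hδ', hε', Λ', hΛ'abs, hΛ'⟩ := ih a' ha'
    set σ : ℝ := if a < 0 then (-1:ℝ) else 1 with hσ
    refine ⟨min |a| (δ' / (4 * (|b₀| + 1))), min ε' (min 1 (δ' / (4 * (|a| + 1)))),
      ?_, ?_, fun b => -σ * b * Λ' b, ?_, ?_⟩
    · exact lt_min (abs_pos.2 ha0) (by positivity)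
    · exact lt_min hε' (lt_min one_pos (by positivity))
    · intro b
      have hσabs : |σ| = 1 := by rw [hσ]; split_ifs <;> simp
      rw [abs_mul, abs_mul, abs_neg, hσabs, hΛ'abs, one_mul, pow_succ]
      ring
    · intro b hb y y' hy hy'
      have hb' : |b - b₀| < ε' := lt_of_lt_of_le hb (min_le_left _ _)
      have hb1 : |b - b₀| < 1 := lt_of_lt_of_le hb (le_trans (min_le_right _ _) (min_le_left _ _))
      have hb2 : |b - b₀| < δ' / (4 * (|a| + 1)) :=
        lt_of_lt_of_le hb (le_trans (min_le_right _ _) (min_le_right _ _))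
      have hya : |y - a| < |a| := lt_of_lt_of_le hy (min_le_left _ _)
      have hy'a : |y' - a| < |a| := lt_of_lt_of_le hy' (min_le_left _ _)
      have hyd : |y - a| < δ' / (4 * (|b₀| + 1)) := lt_of_lt_of_le hy (min_le_right _ _)
      have hy'd : |y' - a| < δ' / (4 * (|b₀| + 1)) := lt_of_lt_of_le hy' (min_le_right _ _)
      -- images are in ball a' δ'
      have key : ∀ z : ℝ, |z - a| < |a| → |z - a| < δ' / (4 * (|b₀| + 1)) →
          |tent b z - a'| < δ' := by
        intro z hz1 hz2
        have ha'def : a' = 1 - b₀ * |a| := rfl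
        have : tent b z - a' = (b₀ - b) * |a| + b * (|a| - |z|) := by
          rw [tent_def, ha'def]; ring
        rw [this]
        have h1 : abs ((b₀ - b) * |a|) ≤ |b - b₀| * (|a| + 1) := by
          rw [abs_mul, abs_abs, abs_sub_comm]
          have : |a| ≤ |a| + 1 := by linarith
          exact mul_le_mul_of_nonneg_left this (abs_nonneg _)
        have h2 : abs (b * (|a| - |z|)) ≤ (|b₀| + 1) * |z - a| := by
          rw [abs_mul]
          have hbb : |b| ≤ |b₀| + 1 := by
            have : |b| - |b₀| ≤ |b - b₀| := by
              have := abs_sub_abs_le_abs_sub b b₀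
              linarith
            linarith
          have habs : abs (|a| - |z|) ≤ |z - a| := by
            rw [abs_sub_comm z a]
            exact abs_abs_sub_abs_le_abs_sub a z
          calc |b| * abs (|a| - |z|) ≤ (|b₀| + 1) * abs (|a| - |z|) :=
                mul_le_mul_of_nonneg_right hbb (abs_nonneg _)
            _ ≤ (|b₀| + 1) * |z - a| := mul_le_mul_of_nonneg_left habs (by positivity)
        calc abs ((b₀ - b) * |a| + b * (|a| - |z|)) ≤ abs ((b₀ - b) * |a|) + abs (b * (|a| - |z|)) :=
              abs_add_le _ _
          _ ≤ |b - b₀| * (|a| + 1) + (|b₀| + 1) * |z - a| := add_le_add h1 h2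
          _ < (δ' / (4 * (|a| + 1))) * (|a| + 1) + (|b₀| + 1) * (δ' / (4 * (|b₀| + 1))) := by
              apply add_lt_add
              · exact mul_lt_mul_of_pos_right hb2 (by positivity)
              · exact mul_lt_mul_of_pos_left hz2 (by positivity)
          _ ≤ δ' / 4 + δ' / 4 := by
              have e1 : (δ' / (4 * (|a| + 1))) * (|a| + 1) = δ' / 4 := by
                field_simp
              have e2 : (|b₀| + 1) * (δ' / (4 * (|b₀| + 1))) = δ' / 4 := by
                field_simp
              rw [e1, e2]
          _ < δ' := by linarith
      have himy := key y hya hyd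
      have himy' := key y' hy'a hy'd
      have step : tent b y - tent b y' = -σ * b * (y - y') := by
        rw [tent_def, tent_def, abs_eq_sign_mul ha0 hya, abs_eq_sign_mul ha0 hy'a, ← hσ]
        ring
      show (tent b)^[r + 1] y - (tent b)^[r + 1] y' = -σ * b * Λ' b * (y - y')
      rw [Function.iterate_succ_apply, Function.iterate_succ_apply,
        hΛ' b hb' (tent b y) (tent b y') himy himy', step]
      ring

noncomputable def tentPoly (b₀ : ℝ) : ℕ → Polynomial ℝ
  | 0 => 0
  | m + 1 => 1 - Polynomial.C (if (tent b₀)^[m] 0 < 0 then (-1:ℝ) else 1) * Polynomial.X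
      * tentPoly b₀ m


lemma lemB (b₀ : ℝ) (M : ℕ) (h : ∀ m, 1 ≤ m → m < M → (tent b₀)^[m] 0 ≠ 0) :
    ∃ ε : ℝ, 0 < ε ∧ ∀ b : ℝ, |b - b₀| < ε → ∀ m, m ≤ M →
      (tentPoly b₀ m).eval b = (tent b)^[m] 0 := by
  induction M with
  | zero =>
    refine ⟨1, one_pos, fun b _ m hm => ?_⟩
    interval_cases m
    simp [tentPoly]
  | succ M ih =>
    obtain ⟨ε₁, hε₁, H₁⟩ := ih (fun m h1 h2 => h m h1 (by omega))
    -- sign control at index M (if M ≥ 1)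
    rcases Nat.eq_zero_or_pos M with hM0 | hM1
    · refine ⟨ε₁, hε₁, fun b hb m hm => ?_⟩
      rcases Nat.lt_succ_iff_lt_or_eq.1 (Nat.lt_succ_of_le hm) with h' | h'
      · exact H₁ b hb m (by omega)
      · subst h' hM0
        simp [tentPoly, Function.iterate_succ_apply', tent]
    · have hz : (tent b₀)^[M] 0 ≠ 0 := h M hM1 (Nat.lt_succ_self M)
      have hc := (tentIterCont M).continuousAt (x := b₀)
      rw [Metric.continuousAt_iff] at hc
      obtain ⟨ε₂, hε₂, H₂⟩ := hc |(tent b₀)^[M] 0| (abs_pos.2 hz)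
      refine ⟨min ε₁ ε₂, lt_min hε₁ hε₂, fun b hb m hm => ?_⟩
      have hb₁ : |b - b₀| < ε₁ := lt_of_lt_of_le hb (min_le_left _ _)
      have hb₂ : dist b b₀ < ε₂ := lt_of_lt_of_le hb (min_le_right _ _)
      rcases Nat.lt_succ_iff_lt_or_eq.1 (Nat.lt_succ_of_le hm) with h' | h'
      · exact H₁ b hb₁ m (by omega)
      · subst h'
        have hsign : |(tent b)^[M] 0| =
            (if (tent b₀)^[M] 0 < 0 then (-1:ℝ) else 1) * (tent b)^[M] 0 := by
          apply abs_eq_sign_mul hz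
          have := H₂ hb₂
          rwa [Real.dist_eq] at this
        rw [Function.iterate_succ_apply']
        show (tentPoly b₀ (M+1)).eval b = 1 - b * |(tent b)^[M] 0|
        rw [tentPoly]
        simp only [eval_sub, eval_one, eval_mul, eval_C, eval_X]
        rw [H₁ b hb₁ M (le_refl M), hsign]
        ring

lemma lemB2 (b₀ : ℝ) : ∀ m : ℕ, (tentPoly b₀ (m+1)).natDegree ≤ m ∧
    ((tentPoly b₀ (m+1)).coeff m = 1 ∨ (tentPoly b₀ (m+1)).coeff m = -1) := by
  intro m
  induction m with
  | zero =>
    constructor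
    · rw [tentPoly, tentPoly]
      simp
    · left
      rw [tentPoly, tentPoly]
      simp
  | succ m ih =>
    obtain ⟨ihdeg, ihc⟩ := ih
    have hs1 : (if (tent b₀)^[m+1] 0 < 0 then (-1:ℝ) else 1) = (1:ℝ) ∨
        (if (tent b₀)^[m+1] 0 < 0 then (-1:ℝ) else 1) = (-1:ℝ) := by
      split_ifs <;> simp
    constructor
    · rw [tentPoly]
      refine le_trans (natDegree_sub_le _ _) ?_
      simp only [natDegree_one]
      refine max_le (by omega) (le_trans natDegree_mul_le ?_)
      have h1 : (Polynomial.C (if (tent b₀)^[m+1] 0 < 0 then (-1:ℝ) else 1)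
          * Polynomial.X).natDegree ≤ 1 := le_trans (natDegree_C_mul_le _ _) natDegree_X_le
      omega
    · have hcoeff : (tentPoly b₀ (m+2)).coeff (m+1)
          = -((if (tent b₀)^[m+1] 0 < 0 then (-1:ℝ) else 1) * (tentPoly b₀ (m+1)).coeff m) := by
        rw [tentPoly, coeff_sub, mul_assoc, coeff_C_mul, coeff_X_mul, coeff_one]
        simp
      rw [hcoeff]
      rcases hs1 with h | h <;> rcases ihc with h' | h' <;> rw [h, h'] <;> simp


lemma lemD (b₀ : ℝ) : ∀ (n : ℕ) (q : Polynomial ℝ), q.natDegree ≤ n → q ≠ 0 →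
    ∃ (d : ℕ) (c η : ℝ), 0 < c ∧ 0 < η ∧
      ∀ b : ℝ, |b - b₀| < η → c * |b - b₀| ^ d ≤ |q.eval b| := by
  intro n
  induction n with
  | zero =>
    intro q hdeg hq
    have hqC : q = Polynomial.C (q.coeff 0) := eq_C_of_natDegree_le_zero hdeg
    have hq0 : q.coeff 0 ≠ 0 := by
      intro h; apply hq; rw [hqC, h, map_zero]
    refine ⟨0, |q.coeff 0|, 1, abs_pos.2 hq0, one_pos, fun b _ => ?_⟩
    rw [hqC, eval_C]
    simp
  | succ n ih =>
    intro q hdeg hq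
    by_cases h0 : q.eval b₀ = 0
    · obtain ⟨q₁, hq₁⟩ := (dvd_iff_isRoot.2 h0)
      have hq₁0 : q₁ ≠ 0 := by
        intro h; apply hq; rw [hq₁, h, mul_zero]
      have hdeg₁ : q₁.natDegree ≤ n := by
        have := natDegree_mul (X_sub_C_ne_zero b₀) hq₁0
        rw [← hq₁, natDegree_X_sub_C] at this
        omega
      obtain ⟨d, c, η, hc, hη, H⟩ := ih q₁ hdeg₁ hq₁0
      refine ⟨d + 1, c, η, hc, hη, fun b hb => ?_⟩
      have : q.eval b = (b - b₀) * q₁.eval b := by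
        rw [hq₁, eval_mul, eval_sub, eval_X, eval_C]
      rw [this, abs_mul, pow_succ]
      calc c * (|b - b₀| ^ d * |b - b₀|) = |b - b₀| * (c * |b - b₀| ^ d) := by ring
        _ ≤ |b - b₀| * |q₁.eval b| :=
            mul_le_mul_of_nonneg_left (H b hb) (abs_nonneg _)
        _ = |b - b₀| * |q₁.eval b| := rfl
    · have hcont := (q.continuous).continuousAt (x := b₀)
      rw [Metric.continuousAt_iff] at hcont
      obtain ⟨η, hη, H⟩ := hcont (|q.eval b₀| / 2) (by positivity)
      refine ⟨0, |q.eval b₀| / 2, η, by positivity, hη, fun b hb => ?_⟩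
      have := H (show dist b b₀ < η by rwa [Real.dist_eq])
      rw [Real.dist_eq] at this
      have h1 : |q.eval b₀| - |q.eval b| ≤ |q.eval b - q.eval b₀| := by
        have := abs_sub_abs_le_abs_sub (q.eval b₀) (q.eval b)
        rw [abs_sub_comm] at this
        linarith
      simp only [pow_zero, mul_one]
      linarith

lemma lemR : ∀ m : ℕ, ∀ b : ℝ, 1 < b → b ≤ 2 → 1 ≤ m → (tent b)^[m] 0 = 0 →
    2 < b ^ m := by
  intro m
  induction m using Nat.strong_induction_on with
  | _ m IH =>
    intro b hb1 hb2 hm h0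
    have hb0 : 0 < b := by linarith
    have hm1 : m ≠ 1 := by
      intro h
      rw [h] at h0
      simp [tent_def] at h0
    by_cases hsq : 2 < b ^ 2
    · have hm2 : 2 ≤ m := by omega
      calc (2:ℝ) < b ^ 2 := hsq
        _ ≤ b ^ m := pow_le_pow_right₀ hb1.le hm2
    · push_neg at hsq
      have hbb1 : 1 < b ^ 2 := one_lt_pow₀ hb1 (by norm_num)
      have hbs : b * (b - 1) < 1 := by nlinarith
      set t : ℝ → ℝ := tent (b ^ 2) with ht
      have key : ∀ j : ℕ, (tent b)^[2 * (j+1)] 0 = -(b - 1) * t^[j+1] 0 ∧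
          |t^[j+1] 0| ≤ 1 ∧ 0 < (tent b)^[2 * j + 1] 0 := by
        intro j
        induction j with
        | zero =>
          refine ⟨?_, ?_, ?_⟩
          · show (tent b)^[2] 0 = -(b-1) * t^[1] 0
            have e1 : t^[1] 0 = 1 := by simp [ht, tent_def]
            have : (tent b)^[2] 0 = tent b (tent b 0) := by
              rw [Function.iterate_succ_apply', Function.iterate_one]
            rw [this, e1]
            simp [tent_def, abs_of_nonneg]
          · have e1 : t^[1] 0 = 1 := by simp [ht, tent_def]
            rw [e1]; norm_num
          · simp [tent_def]
        | succ j ihj =>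
          obtain ⟨e1, e2, _⟩ := ihj
          set u := t^[j+1] 0 with hu
          have habs : |(tent b)^[2*(j+1)] 0| = (b - 1) * |u| := by
            rw [e1, abs_mul, abs_neg, abs_of_pos (by linarith : (0:ℝ) < b - 1)]
          have hodd : (tent b)^[2*(j+1) + 1] 0 = 1 - b * ((b-1) * |u|) := by
            rw [Function.iterate_succ_apply', tent_def, habs]
          have hoddpos : 0 < (tent b)^[2*(j+1) + 1] 0 := by
            rw [hodd]
            have : b * ((b-1) * |u|) ≤ b * (b - 1) := by
              have h1 : (b-1) * |u| ≤ (b-1) * 1 := by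
                apply mul_le_mul_of_nonneg_left e2 (by linarith)
              nlinarith
            linarith
          have heven : (tent b)^[2*(j+2)] 0 = -(b-1) * t^[j+2] 0 := by
            have e3 : (tent b)^[2*(j+2)] 0 = tent b ((tent b)^[2*(j+1)+1] 0) := by
              have : 2*(j+2) = (2*(j+1)+1) + 1 := by ring
              rw [this, Function.iterate_succ_apply']
            rw [e3, tent_def, abs_of_pos hoddpos, hodd]
            have e4 : t^[j+2] 0 = 1 - b^2 * |u| := by
              rw [show j+2 = (j+1)+1 by ring, Function.iterate_succ_apply', ← hu]
              rfl
            rw [e4]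
            ring
          refine ⟨heven, ?_, hoddpos⟩
          have e4 : t^[j+2] 0 = 1 - b^2 * |u| := by
            rw [show j+2 = (j+1)+1 by ring, Function.iterate_succ_apply', ← hu]
            rfl
          rw [e4, abs_le]
          constructor
          · nlinarith [mul_le_mul_of_nonneg_left e2 (by positivity : (0:ℝ) ≤ b^2)]
          · nlinarith [mul_nonneg (by positivity : (0:ℝ) ≤ b^2) (abs_nonneg u)]
      rcases Nat.even_or_odd m with he | ho
      · obtain ⟨j, hj⟩ := he
        have hj1 : 1 ≤ j := by omega
        have : m = 2 * ((j-1)+1) := by omega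
        obtain ⟨e1, _, _⟩ := key (j-1)
        rw [this] at h0
        rw [e1] at h0
        have ht0 : t^[(j-1)+1] 0 = 0 := by
          rcases mul_eq_zero.1 h0 with h | h
          · exfalso; have : b - 1 > 0 := by linarith
            simp at h; linarith
          · exact h
        have hlt : (j-1)+1 < m := by omega
        have := IH ((j-1)+1) hlt (b^2) hbb1 hsq (by omega) ht0
        calc (2:ℝ) < (b^2) ^ ((j-1)+1) := this
          _ = b ^ m := by rw [← pow_mul]; congr 1; omega
      · obtain ⟨j, hj⟩ := ho
        exfalso
        obtain ⟨_, _, hpos⟩ := key j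
        rw [show 2*j+1 = m by omega] at hpos
        rw [h0] at hpos
        exact lt_irrefl 0 hpos


lemma logLip {x y : ℝ} (hx : 1 ≤ x) (hy : 1 ≤ y) :
    |Real.log x - Real.log y| ≤ |x - y| := by
  have key : ∀ a c : ℝ, 1 ≤ a → 1 ≤ c → Real.log a - Real.log c ≤ |a - c| := by
    intro a c ha hc
    have ha0 : (0:ℝ) < a := by linarith
    have hc0 : (0:ℝ) < c := by linarith
    have h1 := Real.log_le_sub_one_of_pos (show (0:ℝ) < a / c by positivity)
    rw [← Real.log_div (ne_of_gt ha0) (ne_of_gt hc0)]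
    have h3 : a / c - 1 ≤ |a - c| := by
      rcases le_or_gt c a with h | h
      · have he : a / c - 1 = (a - c) / c := by field_simp
        rw [he]
        have h4 : (a - c) / c ≤ (a - c) := by
          rw [div_le_iff₀ hc0]
          nlinarith
        have := le_abs_self (a - c)
        linarith
      · have h5 : a / c ≤ 1 := by
          rw [div_le_one hc0]; linarith
        linarith [abs_nonneg (a - c)]
    linarith
  rw [abs_sub_le_iff]
  exact ⟨key x y hx hy, by rw [abs_sub_comm]; exact key y x hy hx⟩

lemma lemFIN (b₀ β c A : ℝ) (k d l₂ : ℕ) (hb₀1 : 1 < b₀) (hβ1 : 1 < β)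
    (hc : 0 < c) (hd : 1 ≤ d) (hA : 0 < A) (hl₂ : 1 ≤ l₂) (hpw : b₀ ≤ β ^ l₂) :
    ∃ C₁ : ℝ, 1 ≤ C₁ ∧ ∀ n : ℕ, 1 ≤ n → ∀ b : ℝ, 1 < b →
      c * (|b - b₀| ^ d * β ^ (k * (n - 2))) ≤ A →
      |Real.log b₀ - Real.log b| ≤ C₁ * b₀ ^ (-((n * k : ℕ) : ℝ) / ((l₂ * d : ℕ) : ℝ)) := by
  have hβ0 : (0:ℝ) < β := by linarith
  have hb₀0 : (0:ℝ) < b₀ := by linarith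
  set K : ℝ := (A / c) * β ^ (2 * k) with hK
  have hK0 : 0 < K := by positivity
  refine ⟨max 1 (K ^ (1 / (d:ℝ))), le_max_left _ _, ?_⟩
  intro n hn b hb1 hineq
  set t : ℝ := |b - b₀| with htdef
  have ht0 : 0 ≤ t := abs_nonneg _
  -- step 1 : t ^ d * β ^ (k * n) ≤ K * c⁻¹ * c ... t ^ d ≤ K / β ^ (k*n)
  have hmono : β ^ (k * n) ≤ β ^ (k * (n - 2)) * β ^ (2 * k) := by
    rw [← pow_add]
    apply pow_le_pow_right₀ hβ1.le
    calc k * n ≤ k * ((n - 2) + 2) := Nat.mul_le_mul_left k (by omega)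
      _ = k * (n - 2) + 2 * k := by ring
  have step1 : t ^ d * β ^ (k * n) ≤ K := by
    have h1 : t ^ d * β ^ (k * (n-2)) ≤ A / c := by
      rw [le_div_iff₀ hc]
      calc t ^ d * β ^ (k * (n-2)) * c = c * (t ^ d * β ^ (k * (n - 2))) := by ring
        _ ≤ A := hineq
    calc t ^ d * β ^ (k * n) ≤ t ^ d * (β ^ (k * (n-2)) * β ^ (2*k)) := by
          apply mul_le_mul_of_nonneg_left hmono (by positivity)
      _ = (t ^ d * β ^ (k * (n-2))) * β ^ (2*k) := by ring
      _ ≤ (A / c) * β ^ (2*k) :=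
          mul_le_mul_of_nonneg_right h1 (by positivity)
      _ = K := rfl
  -- step 2 : (β ^ (k*n))⁻¹ ≤ b₀ ^ (-(n*k)/l₂)
  set e : ℝ := ((n * k : ℕ) : ℝ) with he
  have he0 : 0 ≤ e := by positivity
  have hl₂0 : ((l₂:ℝ)) ≠ 0 := by positivity
  have step2 : (β ^ (k * n) : ℝ)⁻¹ ≤ b₀ ^ (-e / (l₂:ℝ)) := by
    have hbne : b₀ ^ (e / (l₂:ℝ)) ≤ β ^ e := by
      calc b₀ ^ (e / (l₂:ℝ)) ≤ (β ^ l₂) ^ (e / (l₂:ℝ)) := by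
            apply Real.rpow_le_rpow hb₀0.le hpw (by positivity)
        _ = (β ^ ((l₂:ℕ):ℝ)) ^ (e / (l₂:ℝ)) := by rw [Real.rpow_natCast]
        _ = β ^ (((l₂:ℝ)) * (e / (l₂:ℝ))) := by rw [← Real.rpow_mul hβ0.le]
        _ = β ^ e := by rw [mul_div_cancel₀ _ hl₂0]
    have hβkn : (β ^ (k * n) : ℝ) = β ^ e := by
      rw [he, ← Real.rpow_natCast β (k * n)]
      congr 1
      push_cast
      ring
    rw [hβkn]
    rw [neg_div, Real.rpow_neg hb₀0.le]
    apply inv_anti₀ (Real.rpow_pos_of_pos hb₀0 _) hbne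
  -- step 3 : t ≤ K^{1/d} * b₀ ^ (-e/(l₂ d))
  have hd0 : ((d:ℝ)) ≠ 0 := by positivity
  have step3 : t ≤ K ^ (1/(d:ℝ)) * b₀ ^ (-e / ((l₂ * d : ℕ) : ℝ)) := by
    have h1 : t ^ d ≤ K * b₀ ^ (-e / (l₂:ℝ)) := by
      have h2 : t ^ d ≤ K * (β ^ (k * n))⁻¹ := by
        rw [← div_eq_mul_inv, le_div_iff₀ (by positivity : (0:ℝ) < β ^ (k*n))]
        exact step1
      calc t ^ d ≤ K * (β ^ (k * n))⁻¹ := h2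
        _ ≤ K * b₀ ^ (-e / (l₂:ℝ)) := mul_le_mul_of_nonneg_left step2 hK0.le
    have h3 : t = (t ^ (d:ℕ)) ^ (1/(d:ℝ)) := by
      rw [← Real.rpow_natCast t d, ← Real.rpow_mul ht0]
      rw [mul_one_div, div_self hd0, Real.rpow_one]
    rw [h3]
    calc (t ^ (d:ℕ)) ^ (1/(d:ℝ)) ≤ (K * b₀ ^ (-e / (l₂:ℝ))) ^ (1/(d:ℝ)) := by
          apply Real.rpow_le_rpow (by positivity) h1 (by positivity)
      _ = K ^ (1/(d:ℝ)) * (b₀ ^ (-e / (l₂:ℝ))) ^ (1/(d:ℝ)) := by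
          rw [Real.mul_rpow hK0.le (Real.rpow_pos_of_pos hb₀0 _).le]
      _ = K ^ (1/(d:ℝ)) * b₀ ^ ((-e / (l₂:ℝ)) * (1/(d:ℝ))) := by
          rw [← Real.rpow_mul hb₀0.le]
      _ = K ^ (1/(d:ℝ)) * b₀ ^ (-e / ((l₂ * d : ℕ) : ℝ)) := by
          congr 1
          push_cast
          field_simp
  -- conclusion
  have hfin : |Real.log b₀ - Real.log b| ≤ t := by
    have := logLip (le_of_lt hb₀1) (le_of_lt hb1)
    rw [htdef, abs_sub_comm b b₀]
    exact this
  have hX : (0:ℝ) < b₀ ^ (-e / ((l₂ * d : ℕ) : ℝ)) := Real.rpow_pos_of_pos hb₀0 _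
  calc |Real.log b₀ - Real.log b| ≤ t := hfin
    _ ≤ K ^ (1/(d:ℝ)) * b₀ ^ (-e / ((l₂ * d : ℕ) : ℝ)) := step3
    _ ≤ max 1 (K ^ (1 / (d:ℝ))) * b₀ ^ (-e / ((l₂ * d : ℕ) : ℝ)) :=
        mul_le_mul_of_nonneg_right (le_max_right _ _) hX.le

set_option maxHeartbeats 1000000 in
/-- Lemma: let `0` be preperiodic under `T_{b₀}`, with minimal `N ≥ 0`, `k ≥ 1` such that
`T_{b₀}^{N+k}(0) = T_{b₀}^N(0) =: α`.  There are `C₁ ≥ 1`, `l ≥ 1`, a neighbourhood `U_α`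
of `α` and `ε > 0` such that for `b ∈ (1,2]` with `|b − b₀| < ε`: if `n ≥ 1` and
`T_b^{N+jk}(0) ∈ U_α` for `j = 1, …, n`, then `|log b₀ − log b| ≤ C₁ · b₀^{−nk/l}`. -/
theorem tent_parabolic_funnel_estimate (b₀ : ℝ) (hb₀ : b₀ ∈ Set.Ioc (1 : ℝ) 2)
    (N k : ℕ) (hk : 1 ≤ k)
    (hNk : (tent b₀)^[N + k] 0 = (tent b₀)^[N] 0)
    (hkmin : ∀ k', 1 ≤ k' → k' < k → (tent b₀)^[N + k'] 0 ≠ (tent b₀)^[N] 0)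
    (hNmin : ∀ N', N' < N → (tent b₀)^[N' + k] 0 ≠ (tent b₀)^[N'] 0) :
    ∃ C₁ : ℝ, 1 ≤ C₁ ∧ ∃ l : ℕ, 1 ≤ l ∧ ∃ U : Set ℝ, IsOpen U ∧ (tent b₀)^[N] 0 ∈ U ∧
      ∃ ε : ℝ, 0 < ε ∧ ∀ b ∈ Set.Ioc (1 : ℝ) 2, |b - b₀| < ε →
        ∀ n : ℕ, 1 ≤ n → (∀ j ∈ Set.Icc 1 n, (tent b)^[N + j * k] 0 ∈ U) →
          |Real.log b₀ - Real.log b| ≤ C₁ * b₀ ^ (-((n * k : ℕ) : ℝ) / (l : ℝ)) := by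
  obtain ⟨hb₀1, hb₀2⟩ := hb₀
  by_cases h0 : ∃ m, 1 ≤ m ∧ (tent b₀)^[m] 0 = 0
  · -- Case (b) : 0 is periodic
    classical
    set p := Nat.find h0 with hp
    obtain ⟨hp1, hp0⟩ := Nat.find_spec h0
    have hpmin : ∀ m, m < p → ¬(1 ≤ m ∧ (tent b₀)^[m] 0 = 0) := fun m hm => Nat.find_min h0 hm
    have hppos : 0 < p := hp1
    have hper : ∀ j, (tent b₀)^[j + p] 0 = (tent b₀)^[j] 0 := by
      intro j
      rw [Function.iterate_add_apply, hp0]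
    have hmul : ∀ q r, (tent b₀)^[q * p + r] 0 = (tent b₀)^[r] 0 := by
      intro q
      induction q with
      | zero => intro r; simp
      | succ q ih =>
        intro r
        have e : (q+1) * p + r = (q*p + r) + p := by ring
        rw [e, hper, ih]
    have hmod : ∀ j, (tent b₀)^[j] 0 = (tent b₀)^[j % p] 0 := by
      intro j
      conv_lhs => rw [← Nat.div_add_mod j p,
        show p * (j/p) + j % p = (j/p) * p + j % p by ring, hmul]
    have hinj : ∀ i j, i < p → j < p → (tent b₀)^[i] 0 = (tent b₀)^[j] 0 → i = j := by
      have haux : ∀ i j, i < j → j < p → (tent b₀)^[i] 0 ≠ (tent b₀)^[j] 0 := by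
        intro i j hij hjp heq
        have hz : (tent b₀)^[(p - j) + i] 0 = 0 := by
          rw [Function.iterate_add_apply, heq, ← Function.iterate_add_apply,
            show p - j + j = p by omega, hp0]
        exact hpmin ((p-j)+i) (by omega) ⟨by omega, hz⟩
      intro i j hi hj heq
      rcases Nat.lt_trichotomy i j with h | h | h
      · exact absurd heq (haux i j h hj)
      · exact h
      · exact absurd heq.symm (haux j i h hi)
    have hk0 : (tent b₀)^[k] 0 = 0 := by
      have h1 : (tent b₀)^[(N+k) % p] 0 = (tent b₀)^[N % p] 0 := by
        rw [← hmod, ← hmod, hNk]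
      have h2 : (N+k) % p = N % p := hinj _ _ (Nat.mod_lt _ hppos) (Nat.mod_lt _ hppos) h1
      have h3 : p ∣ k := by
        have h2' : Nat.ModEq p N (N + k) := h2.symm
        have := (Nat.modEq_iff_dvd' (Nat.le_add_right N k)).1 h2'
        simpa using this
      obtain ⟨qq, hqq⟩ := h3
      have h4 := hmul qq 0
      rw [Nat.add_zero] at h4
      rw [hqq, Nat.mul_comm, h4]
      simp
    have hN0 : N = 0 := by
      by_contra h
      exact hNmin 0 (by omega) (by simpa using hk0)
    subst hN0
    have hmid : ∀ m, 1 ≤ m → m < k → (tent b₀)^[m] 0 ≠ 0 := by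
      intro m h1 h2
      have := hkmin m h1 h2
      simpa using this
    have hk2 : 2 ≤ k := by
      rcases Nat.lt_or_ge k 2 with h | h
      · exfalso
        have hk1 : k = 1 := by omega
        rw [hk1] at hk0
        simp [tent] at hk0
      · exact h
    have hbk : 2 < b₀ ^ k := lemR k b₀ hb₀1 hb₀2 (by omega) hk0
    have h1def : tent b₀ 0 = 1 := by simp [tent]
    have hsigns : ∀ i, i < k - 1 → (tent b₀)^[i] (1:ℝ) ≠ 0 := by
      intro i hi
      have e : (tent b₀)^[i] (1:ℝ) = (tent b₀)^[i+1] 0 := by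
        rw [Function.iterate_succ_apply, h1def]
      rw [e]
      exact hmid (i+1) (by omega) (by omega)
    obtain ⟨δ₁, εA, hδ₁, hεA, Λ, hΛabs, hΛ⟩ := lemA b₀ (k-1) 1 hsigns
    obtain ⟨εB, hεB, hevalB⟩ := lemB b₀ k hmid
    set q := tentPoly b₀ k with hq
    have hq0 : q.eval b₀ = 0 := by
      rw [hq, hevalB b₀ (by simpa using hεB) k le_rfl, hk0]
    have hqne : q ≠ 0 := by
      intro h
      have h1 := lemB2 b₀ (k-1)
      rw [show k - 1 + 1 = k by omega] at h1
      rcases h1.2 with h2 | h2 <;> rw [hq] at h <;> rw [h, Polynomial.coeff_zero] at h2 <;>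
        norm_num at h2
    obtain ⟨d, c, η, hc, hη, hlemD⟩ := lemD b₀ q.natDegree q le_rfl hqne
    have hd1 : 1 ≤ d := by
      by_contra h
      have hdz : d = 0 := by omega
      have h1 := hlemD b₀ (by simpa using hη)
      rw [hq0, hdz] at h1
      simp at h1
      linarith
    have hconta := (continuous_pow k : Continuous fun x : ℝ => x ^ k).continuousAt (x := b₀)
    rw [Metric.continuousAt_iff] at hconta
    obtain ⟨ε₀, hε₀, H₀⟩ := hconta (b₀ ^ k - 2) (by linarith)
    set ε := min (min εA εB) (min η (min (ε₀/2) ((b₀ - 1)/2))) with hε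
    have hεpos : 0 < ε :=
      lt_min (lt_min hεA hεB) (lt_min hη (lt_min (by linarith) (by linarith)))
    have hεb1 : ε ≤ (b₀ - 1)/2 :=
      le_trans (min_le_right _ _) (le_trans (min_le_right _ _) (min_le_right _ _))
    have hεε₀ : ε ≤ ε₀/2 :=
      le_trans (min_le_right _ _) (le_trans (min_le_right _ _) (min_le_left _ _))
    set β := b₀ - ε with hβ
    have hβ1 : 1 < β := by rw [hβ]; linarith
    have hβk : 2 < β ^ k := by
      have hdist : dist β b₀ < ε₀ := by
        rw [Real.dist_eq, hβ, show b₀ - ε - b₀ = -ε by ring, abs_neg, abs_of_pos hεpos]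
        linarith
      have h5 := H₀ hdist
      rw [Real.dist_eq] at h5
      have := (abs_lt.1 h5).1
      linarith
    set γ := β ^ k - 2 with hγ
    have hγpos : 0 < γ := by rw [hγ]; linarith
    set δ := δ₁ / 2 with hδdef
    have hδpos : 0 < δ := by positivity
    obtain ⟨l₀, hl₀⟩ := pow_unbounded_of_one_lt b₀ hβ1
    set l₂ := max l₀ 1 with hl₂def
    have hl₂1 : 1 ≤ l₂ := le_max_right _ _
    have hpw : b₀ ≤ β ^ l₂ := le_trans hl₀.le (pow_le_pow_right₀ hβ1.le (le_max_left _ _))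
    set A := δ * 2 ^ k / γ with hA
    have hApos : 0 < A := by positivity
    obtain ⟨C₁, hC₁, hFIN⟩ := lemFIN b₀ β c A k d l₂ hb₀1 hβ1 hc hd1 hApos hl₂1 hpw
    refine ⟨C₁, hC₁, l₂ * d, le_trans (by norm_num) (Nat.mul_le_mul hl₂1 hd1),
      Metric.ball 0 δ, Metric.isOpen_ball,
      by simpa using (Metric.mem_ball_self hδpos : (0:ℝ) ∈ Metric.ball (0:ℝ) δ),
      ε, hεpos, ?_⟩
    intro b hbIoc hbε n hn hU
    obtain ⟨hb1, hb2⟩ := hbIoc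
    apply hFIN n hn b hb1
    have hβb : β ≤ b := by
      have := (abs_lt.1 hbε).1
      rw [hβ]; linarith
    have hbεA : |b - b₀| < εA := lt_of_lt_of_le hbε (le_trans (min_le_left _ _) (min_le_left _ _))
    have hbεB : |b - b₀| < εB := lt_of_lt_of_le hbε (le_trans (min_le_left _ _) (min_le_right _ _))
    have hbη : |b - b₀| < η := lt_of_lt_of_le hbε (le_trans (min_le_right _ _) (min_le_left _ _))
    have hmem : ∀ j, 1 ≤ j → j ≤ n → |(tent b)^[j*k] 0| < δ := by
      intro j h1 h2
      have := hU j (Set.mem_Icc.2 ⟨h1, h2⟩)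
      rw [Metric.mem_ball, Real.dist_eq, sub_zero, Nat.zero_add] at this
      exact this
    have he : q.eval b = (tent b)^[k] 0 := hevalB b hbεB k le_rfl
    have hsb : 2 < b ^ k := lt_of_lt_of_le hβk (pow_le_pow_left₀ (by linarith) hβb k)
    have hbpos : (0:ℝ) < b := by linarith
    have h1defb : tent b 0 = 1 := by simp [tent]
    -- one-step expansion estimate
    have hstep : ∀ j, 1 ≤ j → j + 1 ≤ n →
        b ^ k * |(tent b)^[j*k] 0| - |q.eval b| ≤ |(tent b)^[(j+1)*k] 0| := by
      intro j h1 h2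
      have hvj := hmem j h1 (by omega)
      have htv : tent b ((tent b)^[j*k] 0) - 1 = -(b * |(tent b)^[j*k] 0|) := by
        rw [tent_def]; ring
      have himg : |tent b ((tent b)^[j*k] 0) - 1| < δ₁ := by
        rw [htv, abs_neg, abs_mul, abs_of_pos hbpos, abs_abs]
        have hb2' : b * |(tent b)^[j*k] 0| ≤ 2 * |(tent b)^[j*k] 0| :=
          mul_le_mul_of_nonneg_right hb2 (abs_nonneg _)
        have : 2 * |(tent b)^[j*k] 0| < 2 * δ := by linarith
        rw [hδdef] at this
        linarith
      have hone : |(1:ℝ) - 1| < δ₁ := by simpa using hδ₁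
      have hrel := hΛ b hbεA (tent b ((tent b)^[j*k] 0)) 1 himg hone
      have e1 : (tent b)^[k-1] (tent b ((tent b)^[j*k] 0)) = (tent b)^[(j+1)*k] 0 := by
        rw [← Function.iterate_succ_apply, Nat.succ_eq_add_one,
          show k - 1 + 1 = k by omega, ← Function.iterate_add_apply]
        congr 1
        ring
      have e2 : (tent b)^[k-1] (1:ℝ) = q.eval b := by
        rw [he, ← h1defb, ← Function.iterate_succ_apply, Nat.succ_eq_add_one,
          show k - 1 + 1 = k by omega]
      rw [e1, e2] at hrel
      have habs : |(tent b)^[(j+1)*k] 0 - q.eval b| = b ^ k * |(tent b)^[j*k] 0| := by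
        rw [hrel, abs_mul, hΛabs b, abs_of_pos hbpos, htv, abs_neg, abs_mul,
          abs_of_pos hbpos, abs_abs, ← mul_assoc, ← pow_succ,
          show k - 1 + 1 = k by omega]
      have htri : |(tent b)^[(j+1)*k] 0 - q.eval b| ≤ |(tent b)^[(j+1)*k] 0| + |q.eval b| :=
        abs_sub _ _
      linarith [habs ▸ htri]
    have hE1 : (0:ℝ) < b ^ k - 1 := by linarith
    set E := |q.eval b| / (b ^ k - 1) with hEdef
    have hEnn : 0 ≤ E := by positivity
    have hEe : (b ^ k - 1) * E = |q.eval b| := by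
      rw [hEdef]; field_simp
    have hgrow : ∀ i, i + 1 ≤ n →
        b ^ (k*i) * (|q.eval b| - E) + E ≤ |(tent b)^[(i+1)*k] 0| := by
      intro i
      induction i with
      | zero =>
        intro _
        rw [Nat.mul_zero, pow_zero, one_mul, sub_add_cancel, Nat.one_mul, ← he]
      | succ i ih =>
        intro h2
        have h1 := ih (by omega)
        have hs := hstep (i+1) (by omega) (by omega)
        have hmul2 : b ^ k * (b ^ (k*i) * (|q.eval b| - E) + E) - |q.eval b|
            = b ^ (k*(i+1)) * (|q.eval b| - E) + E := by
          rw [← hEe, show k*(i+1) = k*i + k by ring, pow_add]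
          ring
        have hmono2 : b ^ k * (b ^ (k*i) * (|q.eval b| - E) + E)
            ≤ b ^ k * |(tent b)^[(i+1)*k] 0| :=
          mul_le_mul_of_nonneg_left h1 (by positivity)
        calc b ^ (k*(i+1)) * (|q.eval b| - E) + E
            = b ^ k * (b ^ (k*i) * (|q.eval b| - E) + E) - |q.eval b| := hmul2.symm
          _ ≤ b ^ k * |(tent b)^[(i+1)*k] 0| - |q.eval b| := by linarith
          _ ≤ |(tent b)^[(i+1+1)*k] 0| := hs
    have hlast := hgrow (n-1) (by omega)
    rw [show n-1+1 = n by omega] at hlast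
    have hvn := hmem n (by omega) le_rfl
    have hq2 : |q.eval b| - E = |q.eval b| * (b ^ k - 2) / (b ^ k - 1) := by
      rw [hEdef]; field_simp; ring
    have h5 : b ^ (k*(n-1)) * (|q.eval b| * (b ^ k - 2) / (b ^ k - 1)) ≤ δ := by
      rw [← hq2]; linarith
    set P := |q.eval b| * b ^ (k*(n-1)) with hP
    have hPnn : 0 ≤ P := by positivity
    have hP1 : P * (b ^ k - 2) ≤ δ * (b ^ k - 1) := by
      have h6 := mul_le_mul_of_nonneg_right h5 (le_of_lt hE1)
      calc P * (b ^ k - 2)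
          = b ^ (k*(n-1)) * (|q.eval b| * (b ^ k - 2) / (b ^ k - 1)) * (b ^ k - 1) := by
            rw [hP]; field_simp
        _ ≤ δ * (b ^ k - 1) := h6
    have hbk2 : b ^ k ≤ 2 ^ k := pow_le_pow_left₀ (by linarith) hb2 k
    have hP2 : P * γ ≤ δ * 2 ^ k := by
      have hγle : γ ≤ b ^ k - 2 := by
        rw [hγ]
        have : β ^ k ≤ b ^ k := pow_le_pow_left₀ (by linarith) hβb k
        linarith
      calc P * γ ≤ P * (b ^ k - 2) := mul_le_mul_of_nonneg_left hγle hPnn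
        _ ≤ δ * (b ^ k - 1) := hP1
        _ ≤ δ * 2 ^ k := mul_le_mul_of_nonneg_left (by linarith) hδpos.le
    have l1 : c * |b - b₀| ^ d ≤ |q.eval b| := hlemD b hbη
    have l2 : β ^ (k*(n-2)) ≤ b ^ (k*(n-1)) := by
      calc β ^ (k*(n-2)) ≤ β ^ (k*(n-1)) :=
            pow_le_pow_right₀ hβ1.le (Nat.mul_le_mul_left k (by omega))
        _ ≤ b ^ (k*(n-1)) := pow_le_pow_left₀ (by linarith) hβb _
    calc c * (|b - b₀| ^ d * β ^ (k*(n-2)))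
        = (c * |b - b₀| ^ d) * β ^ (k*(n-2)) := by ring
      _ ≤ |q.eval b| * b ^ (k*(n-1)) := mul_le_mul l1 l2 (by positivity) (abs_nonneg _)
      _ = P := rfl
      _ ≤ δ * 2 ^ k / γ := by rw [le_div_iff₀ hγpos]; exact hP2
      _ = A := rfl
  · -- Case (a) : the orbit of 0 never returns to 0
    push_neg at h0
    have hN1 : 1 ≤ N := by
      by_contra h
      have hN0 : N = 0 := by omega
      subst hN0
      exact h0 k hk (by simpa using hNk)
    set α := (tent b₀)^[N] 0 with hα
    have hsigns : ∀ i, i < k → (tent b₀)^[i] α ≠ 0 := by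
      intro i _
      rw [hα, ← Function.iterate_add_apply]
      exact h0 (i + N) (by omega)
    obtain ⟨δA, εA, hδA, hεA, Λ, hΛabs, hΛ⟩ := lemA b₀ k α hsigns
    obtain ⟨εB, hεB, hevalB⟩ := lemB b₀ (N + 2*k) (fun m h1 _ => h0 m h1)
    set ψq := tentPoly b₀ (N + 2*k) - tentPoly b₀ (N + k) with hψq
    have hNk2 : (tent b₀)^[N + 2*k] 0 = (tent b₀)^[N + k] 0 := by
      have e : N + 2*k = k + (N + k) := by ring
      rw [e, Function.iterate_add_apply, hNk, hα, ← Function.iterate_add_apply, Nat.add_comm]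
      exact hNk
    have hψ0 : ψq.eval b₀ = 0 := by
      rw [hψq, Polynomial.eval_sub,
        hevalB b₀ (by simpa using hεB) (N + 2*k) le_rfl,
        hevalB b₀ (by simpa using hεB) (N + k) (by omega), hNk2, sub_self]
    have hψne : ψq ≠ 0 := by
      intro hcontra
      have h1 := lemB2 b₀ (N + 2*k - 1)
      rw [show N + 2*k - 1 + 1 = N + 2*k by omega] at h1
      have h2 := (lemB2 b₀ (N + k - 1)).1
      rw [show N + k - 1 + 1 = N + k by omega] at h2
      have hc2 : (tentPoly b₀ (N + k)).coeff (N + 2*k - 1) = 0 := by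
        apply Polynomial.coeff_eq_zero_of_natDegree_lt
        omega
      have hco : ψq.coeff (N + 2*k - 1) = (tentPoly b₀ (N + 2*k)).coeff (N + 2*k - 1) := by
        rw [hψq, Polynomial.coeff_sub, hc2, sub_zero]
      rw [hcontra, Polynomial.coeff_zero] at hco
      rcases h1.2 with h | h <;> rw [h] at hco <;> norm_num at hco
    obtain ⟨d, c, η, hc, hη, hlemD⟩ := lemD b₀ ψq.natDegree ψq le_rfl hψne
    have hd1 : 1 ≤ d := by
      by_contra h
      have hdz : d = 0 := by omega
      have h1 := hlemD b₀ (by simpa using hη)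
      rw [hψ0, hdz] at h1
      simp at h1
      linarith
    set ε := min (min εA εB) (min η ((b₀ - 1)/2)) with hε
    have hεpos : 0 < ε := lt_min (lt_min hεA hεB) (lt_min hη (by linarith))
    have hεb1 : ε ≤ (b₀ - 1)/2 := le_trans (min_le_right _ _) (min_le_right _ _)
    set β := b₀ - ε with hβ
    have hβ1 : 1 < β := by rw [hβ]; linarith
    obtain ⟨l₀, hl₀⟩ := pow_unbounded_of_one_lt b₀ hβ1
    set l₂ := max l₀ 1 with hl₂def
    have hl₂1 : 1 ≤ l₂ := le_max_right _ _
    have hpw : b₀ ≤ β ^ l₂ := le_trans hl₀.le (pow_le_pow_right₀ hβ1.le (le_max_left _ _))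
    set A := c * ε ^ d + 2 * δA with hA
    have hApos : 0 < A := by positivity
    obtain ⟨C₁, hC₁, hFIN⟩ := lemFIN b₀ β c A k d l₂ hb₀1 hβ1 hc hd1 hApos hl₂1 hpw
    refine ⟨C₁, hC₁, l₂ * d, le_trans (by norm_num) (Nat.mul_le_mul hl₂1 hd1),
      Metric.ball α δA, Metric.isOpen_ball, Metric.mem_ball_self hδA, ε, hεpos, ?_⟩
    intro b hbIoc hbε n hn hU
    obtain ⟨hb1, hb2⟩ := hbIoc
    apply hFIN n hn b hb1
    have hβb : β ≤ b := by
      have := (abs_lt.1 hbε).1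
      rw [hβ]; linarith
    rcases Nat.lt_or_ge n 2 with hn2 | hn2
    · -- n = 1
      rw [show n - 2 = 0 by omega, Nat.mul_zero, pow_zero, mul_one]
      have h1 : |b - b₀| ^ d ≤ ε ^ d := pow_le_pow_left₀ (abs_nonneg _) hbε.le d
      have h2 : c * |b - b₀| ^ d ≤ c * ε ^ d := mul_le_mul_of_nonneg_left h1 hc.le
      rw [hA]
      nlinarith [hδA]
    · -- n ≥ 2
      have hmem : ∀ j, 1 ≤ j → j ≤ n → |(tent b)^[N + j*k] 0 - α| < δA := by
        intro j h1 h2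
        have := hU j (Set.mem_Icc.2 ⟨h1, h2⟩)
        rwa [Metric.mem_ball, Real.dist_eq] at this
      have hbεA : |b - b₀| < εA := lt_of_lt_of_le hbε (le_trans (min_le_left _ _) (min_le_left _ _))
      have hbεB : |b - b₀| < εB := lt_of_lt_of_le hbε (le_trans (min_le_left _ _) (min_le_right _ _))
      have hbη : |b - b₀| < η := lt_of_lt_of_le hbε (le_trans (min_le_right _ _) (min_le_left _ _))
      set D : ℕ → ℝ := fun j => (tent b)^[N + (j+1)*k] 0 - (tent b)^[N + j*k] 0 with hD
      have hstep : ∀ i, 1 ≤ i → i + 2 ≤ n → D (i+1) = Λ b * D i := by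
        intro i h1 h2
        have hy1 : |(tent b)^[N + (i+1)*k] 0 - α| < δA := hmem (i+1) (by omega) (by omega)
        have hy0 : |(tent b)^[N + i*k] 0 - α| < δA := hmem i h1 (by omega)
        have hrel := hΛ b hbεA ((tent b)^[N + (i+1)*k] 0) ((tent b)^[N + i*k] 0) hy1 hy0
        rw [← Function.iterate_add_apply, ← Function.iterate_add_apply] at hrel
        rw [show k + (N + (i+1)*k) = N + (i+1+1)*k by ring,
          show k + (N + i*k) = N + (i+1)*k by ring] at hrel
        simp only [hD]
        exact hrel
      have hgrow : ∀ i, i + 2 ≤ n → |D (i+1)| = b ^ (k*i) * |D 1| := by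
        intro i
        induction i with
        | zero => intro _; simp
        | succ i ih =>
          intro h2
          have h1 := ih (by omega)
          have h3 := hstep (i+1) (by omega) h2
          rw [h3, abs_mul, hΛabs b, h1, abs_of_pos (by linarith : (0:ℝ) < b)]
          rw [← mul_assoc, ← pow_add]
          congr 2
          ring
      have hmain := hgrow (n-2) (by omega)
      have hbound : |D (n-2+1)| ≤ 2 * δA := by
        have hyn : |(tent b)^[N + (n-2+1+1)*k] 0 - α| < δA := by
          rw [show n-2+1+1 = n by omega]
          exact hmem n (by omega) le_rfl
        have hyn1 : |(tent b)^[N + (n-2+1)*k] 0 - α| < δA := hmem (n-2+1) (by omega) (by omega)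
        simp only [hD]
        calc |(tent b)^[N + (n-2+1+1)*k] 0 - (tent b)^[N + (n-2+1)*k] 0|
            ≤ |(tent b)^[N + (n-2+1+1)*k] 0 - α| + |α - (tent b)^[N + (n-2+1)*k] 0| :=
              abs_sub_le _ _ _
          _ ≤ 2 * δA := by
              rw [abs_sub_comm α]
              linarith
      have hψeval : ψq.eval b = D 1 := by
        simp only [hD]
        rw [show N + (1+1)*k = N + 2*k by ring, show N + 1*k = N + k by ring]
        rw [hψq, Polynomial.eval_sub, hevalB b hbεB (N + 2*k) le_rfl,
          hevalB b hbεB (N + k) (by omega)]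
      have h1 : c * |b - b₀| ^ d ≤ |D 1| := by
        rw [← hψeval]
        exact hlemD b hbη
      have h2 : β ^ (k*(n-2)) ≤ b ^ (k*(n-2)) := pow_le_pow_left₀ (by linarith) hβb _
      calc c * (|b - b₀| ^ d * β ^ (k*(n-2))) = (c * |b - b₀| ^ d) * β ^ (k*(n-2)) := by ring
        _ ≤ |D 1| * b ^ (k*(n-2)) := mul_le_mul h1 h2 (by positivity) (abs_nonneg _)
        _ = b ^ (k*(n-2)) * |D 1| := by ring
        _ = |D (n-2+1)| := hmain.symm
        _ ≤ 2 * δA := hbound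
        _ ≤ A := by
            have : 0 ≤ c * ε ^ d := by positivity
            rw [hA]; linarith
end

section
/- Let 0 < δ < 1 and let ρ : (−2δ, 2δ) × [0, 2δ²) → ℝ, (x,t) ↦ ρ_t(x), be a C² map such that each ρ_t is a diffeomorphism onto its image (ρ_t is injective with nowhere-vanishing derivative on (−2δ, 2δ)). Assume ρ_0(0) = 0, ρ_0'(0) = 1, and ρ_0(x) < x for all x ∈ (0, δ]. Then there exist ε₀ > 0, t₀ > 0 and C > 1 such that for all t ∈ [0, t₀] and all x ∈ (√t, ε₀), one has ρ_t^n(x) ∈ (0, ε₀) for every integer n with 0 ≤ n ≤ 1/(C√t) (in particular all these iterates are defined and remain in (0, ε₀)). -/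
open Set

set_option maxHeartbeats 2000000 in
/-- Lemma (parabolic funnel): let `ρ : (x,t) ↦ ρ_t(x)` be a C² family on
`(−2δ, 2δ) × [0, 2δ²)` of diffeomorphisms onto their images, with `ρ_0(0) = 0`,
`ρ_0'(0) = 1` and `ρ_0(x) < x` on `(0, δ]`.  Then there are `ε₀, t₀ > 0` and `C > 1` such
that for `t ∈ [0, t₀]` and `x ∈ (√t, ε₀)`, all iterates `ρ_t^n(x)` with `n ≤ 1/(C√t)`
(i.e. `n·C·√t ≤ 1`) remain in `(0, ε₀)`. -/
theorem parabolic_funnel (δ : ℝ) (hδ : 0 < δ) (hδ1 : δ < 1) (ρ : ℝ → ℝ → ℝ)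
    -- ρ, as a function of (x, t), is C² on (−2δ, 2δ) × [0, 2δ²); here `ρ t x = ρ_t(x)`
    (hC2 : ContDiffOn ℝ 2 (fun q : ℝ × ℝ => ρ q.2 q.1)
      (Set.Ioo (-(2 * δ)) (2 * δ) ×ˢ Set.Ico 0 (2 * δ ^ 2)))
    -- each ρ_t is a diffeomorphism onto its image
    (hdiffeo : ∀ t ∈ Set.Ico (0 : ℝ) (2 * δ ^ 2),
      Set.InjOn (ρ t) (Set.Ioo (-(2 * δ)) (2 * δ)) ∧
      ∀ x ∈ Set.Ioo (-(2 * δ)) (2 * δ), deriv (ρ t) x ≠ 0)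
    (hfix : ρ 0 0 = 0) (hder : deriv (ρ 0) 0 = 1)
    (hbelow : ∀ x ∈ Set.Ioc (0 : ℝ) δ, ρ 0 x < x) :
    ∃ ε₀ : ℝ, 0 < ε₀ ∧ ∃ t₀ : ℝ, 0 < t₀ ∧ ∃ C : ℝ, 1 < C ∧
      ∀ t ∈ Set.Icc (0 : ℝ) t₀, ∀ x ∈ Set.Ioo (Real.sqrt t) ε₀,
        ∀ n : ℕ, (n : ℝ) * (C * Real.sqrt t) ≤ 1 →
          (ρ t)^[n] x ∈ Set.Ioo (0 : ℝ) ε₀ := by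
  clear hdiffeo
  have hδ2 : (0:ℝ) < 2 * δ ^ 2 := by positivity
  set U : Set ℝ := Set.Ioo (-(2*δ)) (2*δ) with hUdef
  set D : Set (ℝ × ℝ) := U ×ˢ Set.Ico 0 (2 * δ ^ 2) with hDdef
  have hUopen : IsOpen U := isOpen_Ioo
  have hIccU : Set.Icc (-δ) δ ⊆ U := Set.Icc_subset_Ioo (by linarith) (by linarith)
  -- `ρ 0` is C² on U
  have hg2 : ContDiffOn ℝ 2 (ρ 0) U := by
    have hmap : Set.MapsTo (fun x : ℝ => (x, (0:ℝ))) U D :=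
      fun x hx => ⟨hx, ⟨le_refl 0, hδ2⟩⟩
    exact hC2.comp ((contDiff_id.prodMk contDiff_const).contDiffOn) hmap
  -- quadratic Taylor bound for ρ 0 near 0
  obtain ⟨K, hKpos, hquad⟩ :
      ∃ K : ℝ, 0 < K ∧ ∀ x ∈ Set.Icc (0:ℝ) δ, |ρ 0 x - x| ≤ K * x ^ 2 := by
    have hgdiff : DifferentiableOn ℝ (ρ 0) U := hg2.differentiableOn (by norm_num)
    have h1 : ContDiffOn ℝ 1 (deriv (ρ 0)) U := hg2.deriv_of_isOpen hUopen (by norm_num)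
    have hd1 : DifferentiableOn ℝ (deriv (ρ 0)) U := h1.differentiableOn (by norm_num)
    have hc2 : ContinuousOn (deriv (deriv (ρ 0))) U :=
      h1.continuousOn_deriv_of_isOpen hUopen le_rfl
    obtain ⟨c, hcmem, hcmax⟩ :=
      isCompact_Icc.exists_isMaxOn (Set.nonempty_Icc.2 (by linarith))
        ((hc2.mono hIccU).norm)
    set K : ℝ := ‖deriv (deriv (ρ 0)) c‖ + 1 with hKdef
    have hKpos : 0 < K := by positivity
    have hKlip : ∀ x ∈ Set.Icc (-δ) δ, ‖deriv (ρ 0) x - 1‖ ≤ K * ‖x‖ := by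
      intro x hx
      have := Convex.norm_image_sub_le_of_norm_hasDerivWithin_le
        (f := deriv (ρ 0)) (f' := deriv (deriv (ρ 0))) (C := K) (s := Set.Icc (-δ) δ)
        (fun y hy =>
          ((hd1.differentiableAt (hUopen.mem_nhds (hIccU hy))).hasDerivAt).hasDerivWithinAt)
        (fun y hy => le_trans (hcmax hy) (by simp [hKdef])) (convex_Icc _ _)
        (show (0:ℝ) ∈ Set.Icc (-δ) δ from ⟨by linarith, by linarith⟩) hx
      simpa [hder, sub_zero] using this
    refine ⟨K, hKpos, ?_⟩
    intro x hx
    have hsub : Set.Icc (0:ℝ) x ⊆ Set.Icc (-δ) δ := by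
      intro y hy
      exact ⟨by linarith [hy.1], le_trans hy.2 hx.2⟩
    have hmvt := Convex.norm_image_sub_le_of_norm_hasDerivWithin_le
      (f := fun y => ρ 0 y - y) (f' := fun y => deriv (ρ 0) y - 1) (C := K * x)
      (s := Set.Icc (0:ℝ) x)
      (fun y hy => (((hgdiff.differentiableAt
          (hUopen.mem_nhds (hIccU (hsub hy)))).hasDerivAt).sub (hasDerivAt_id y)).hasDerivWithinAt)
      (fun y hy => by
        have h1 := hKlip y (hsub hy)
        have h2 : ‖y‖ ≤ x := by
          rw [Real.norm_eq_abs, abs_of_nonneg hy.1]; exact hy.2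
        calc ‖deriv (ρ 0) y - 1‖ ≤ K * ‖y‖ := h1
          _ ≤ K * x := by nlinarith)
      (convex_Icc _ _) (Set.mem_Icc.2 ⟨le_rfl, hx.1⟩) (Set.mem_Icc.2 ⟨hx.1, le_rfl⟩)
    have h3 : ‖(ρ 0 x - x) - (ρ 0 0 - 0)‖ ≤ K * x * ‖x - 0‖ := hmvt
    rw [hfix] at h3
    have hxn : ‖x - 0‖ = x := by
      rw [sub_zero, Real.norm_eq_abs, abs_of_nonneg hx.1]
    rw [hxn, sub_zero, sub_zero] at h3
    calc |ρ 0 x - x| ≤ K * x * x := h3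
      _ = K * x ^ 2 := by ring
  -- time-Lipschitz bound
  obtain ⟨L, hLpos, hLlip⟩ :
      ∃ L : ℝ, 0 < L ∧ ∀ x ∈ Set.Icc (-δ) δ, ∀ t ∈ Set.Icc (0:ℝ) (δ^2),
        |ρ t x - ρ 0 x| ≤ L * t := by
    have hDunique : UniqueDiffOn ℝ D := (hUopen.uniqueDiffOn).prod (uniqueDiffOn_Ico _ _)
    have hFdiff : DifferentiableOn ℝ (fun q : ℝ × ℝ => ρ q.2 q.1) D :=
      hC2.differentiableOn (by norm_num)
    set s : Set (ℝ × ℝ) := Set.Icc (-δ) δ ×ˢ Set.Icc (0:ℝ) (δ^2) with hsdef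
    have hsD : s ⊆ D := by
      intro q hq
      exact ⟨hIccU hq.1, ⟨hq.2.1, by nlinarith [hq.2.2]⟩⟩
    have hscompact : IsCompact s := isCompact_Icc.prod isCompact_Icc
    have hsconvex : Convex ℝ s := (convex_Icc _ _).prod (convex_Icc _ _)
    have hsne : s.Nonempty :=
      ⟨(0, 0), Set.mk_mem_prod ⟨by linarith, by linarith⟩ ⟨le_rfl, by positivity⟩⟩
    have hfc : ContinuousOn (fun q => ‖fderivWithin ℝ (fun q : ℝ × ℝ => ρ q.2 q.1) D q‖) s :=
      ((hC2.continuousOn_fderivWithin hDunique (by norm_num)).mono hsD).norm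
    obtain ⟨q₀, hq₀mem, hq₀max⟩ := hscompact.exists_isMaxOn hsne hfc
    set L : ℝ := ‖fderivWithin ℝ (fun q : ℝ × ℝ => ρ q.2 q.1) D q₀‖ + 1 with hLdef
    refine ⟨L, by positivity, ?_⟩
    intro x hx t ht
    have hmvt := Convex.norm_image_sub_le_of_norm_hasFDerivWithin_le
      (f := fun q : ℝ × ℝ => ρ q.2 q.1)
      (f' := fun q => fderivWithin ℝ (fun q : ℝ × ℝ => ρ q.2 q.1) D q) (C := L) (s := s)
      (fun q hq => ((hFdiff q (hsD hq)).hasFDerivWithinAt).mono hsD)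
      (fun q hq => le_trans (hq₀max hq) (by simp [hLdef])) hsconvex
      (show ((x, (0:ℝ)) : ℝ × ℝ) ∈ s from
        Set.mk_mem_prod hx ⟨le_rfl, by positivity⟩)
      (show ((x, t) : ℝ × ℝ) ∈ s from Set.mk_mem_prod hx ht)
    have hnorm : ‖((x, t) : ℝ × ℝ) - (x, 0)‖ = t := by
      have hd : ((x, t) : ℝ × ℝ) - (x, 0) = (0, t) := by simp
      rw [hd, Prod.norm_def]
      simp [Real.norm_eq_abs, abs_of_nonneg ht.1, max_eq_right ht.1]
    rw [hnorm] at hmvt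
    exact hmvt
  -- constants
  set K' : ℝ := K + 4 * L with hK'def
  have hK'pos : 0 < K' := by positivity
  set ε₀ : ℝ := min δ (1 / (2 * K')) with hε₀def
  have hε₀pos : 0 < ε₀ := lt_min hδ (by positivity)
  have hε₀δ : ε₀ ≤ δ := min_le_left _ _
  have hε₀K' : K' * ε₀ ≤ 1 / 2 := by
    have h := min_le_right δ (1 / (2 * K'))
    have h2 : K' * (1 / (2 * K')) = 1 / 2 := by field_simp
    nlinarith
  -- the repelling gap η on [ε₀/2, ε₀]
  obtain ⟨η, hηpos, hηmin⟩ :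
      ∃ η : ℝ, 0 < η ∧ ∀ y ∈ Set.Icc (ε₀/2) ε₀, ρ 0 y ≤ y - η := by
    have hIccU' : Set.Icc (ε₀/2) ε₀ ⊆ U := by
      intro y hy
      constructor
      · simp only [hUdef] at *
        linarith [hy.1]
      · linarith [hy.2, hε₀δ]
    obtain ⟨xm, hxmmem, hxmmin⟩ :=
      isCompact_Icc.exists_isMinOn (Set.nonempty_Icc.2 (by linarith))
        ((continuousOn_id.sub (hg2.continuousOn.mono hIccU')) :
          ContinuousOn (fun y => y - ρ 0 y) (Set.Icc (ε₀/2) ε₀))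
    refine ⟨xm - ρ 0 xm, ?_, ?_⟩
    · have := hbelow xm ⟨by linarith [hxmmem.1], le_trans hxmmem.2 hε₀δ⟩
      linarith
    · intro y hy
      have h := hxmmin hy
      simp only [Set.mem_setOf_eq, id_eq, Pi.sub_apply] at h
      linarith
  -- choose t₀ and C
  set t₀ : ℝ := min (δ^2) (min (η / (2*L)) (ε₀ / (4*L))) with ht₀def
  have ht₀pos : 0 < t₀ := lt_min (by positivity) (lt_min (by positivity) (by positivity))
  have ht₀δ : t₀ ≤ δ^2 := min_le_left _ _
  have ht₀η : t₀ ≤ η / (2*L) := le_trans (min_le_right _ _) (min_le_left _ _)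
  have ht₀ε : t₀ ≤ ε₀ / (4*L) := le_trans (min_le_right _ _) (min_le_right _ _)
  set C : ℝ := 2 * K' + 2 with hCdef
  have hC1 : 1 < C := by linarith
  refine ⟨ε₀, hε₀pos, t₀, ht₀pos, C, hC1, ?_⟩
  clear_value K' ε₀ t₀ C
  clear hC2 hg2 hUopen hIccU hδ2 hfix hder hε₀def ht₀def hUdef hDdef U D
  intro t ht x hx n hn
  have ht0 : 0 ≤ t := ht.1
  have hst : 0 ≤ Real.sqrt t := Real.sqrt_nonneg t
  have htsq : Real.sqrt t * Real.sqrt t = t := Real.mul_self_sqrt ht0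
  -- main induction
  suffices H : ∀ k : ℕ, (k : ℝ) * (C * Real.sqrt t) ≤ 1 →
      ((ρ t)^[k] x ∈ Set.Ioo (0:ℝ) ε₀ ∧
        Real.sqrt t / (ρ t)^[k] x ≤ 1 + 2 * K' * Real.sqrt t * k) by
    exact (H n hn).1
  intro k
  induction k with
  | zero =>
    intro _
    simp only [Function.iterate_zero_apply, Nat.cast_zero, mul_zero, add_zero]
    have hx0 : 0 < x := lt_of_le_of_lt hst hx.1
    exact ⟨⟨hx0, hx.2⟩, by rw [div_le_one hx0]; exact le_of_lt hx.1⟩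
  | succ k ih =>
    intro hk1
    have hCst : 0 ≤ C * Real.sqrt t := by positivity
    have hk : (k : ℝ) * (C * Real.sqrt t) ≤ 1 := by
      have hle : (k : ℝ) ≤ (k : ℝ) + 1 := by linarith
      calc (k : ℝ) * (C * Real.sqrt t) ≤ ((k:ℝ)+1) * (C * Real.sqrt t) := by nlinarith
        _ = ((k+1 : ℕ) : ℝ) * (C * Real.sqrt t) := by push_cast; ring
        _ ≤ 1 := hk1
    obtain ⟨⟨hy0, hyε⟩, hz⟩ := ih hk
    set y : ℝ := (ρ t)^[k] x with hydef
    clear_value y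
    -- 2K'√t k ≤ 1
    have hBk : 2 * K' * Real.sqrt t * k ≤ 1 := by
      have h2K'C : 2 * K' ≤ C := by linarith
      have hkst : (0:ℝ) ≤ (k:ℝ) * Real.sqrt t := by positivity
      calc 2 * K' * Real.sqrt t * k = (2*K') * ((k:ℝ) * Real.sqrt t) := by ring
        _ ≤ C * ((k:ℝ) * Real.sqrt t) := by nlinarith
        _ = (k:ℝ) * (C * Real.sqrt t) := by ring
        _ ≤ 1 := hk
    -- y ≥ √t / 2 and t ≤ 4 y²
    have hy2 : Real.sqrt t ≤ 2 * y := by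
      have h := le_trans hz (by linarith : 1 + 2 * K' * Real.sqrt t * k ≤ 2)
      rw [div_le_iff₀ hy0] at h
      linarith
    have ht4 : t ≤ 4 * y ^ 2 := by
      have h1 : Real.sqrt t * Real.sqrt t ≤ (2*y) * (2*y) :=
        mul_le_mul hy2 hy2 hst (by linarith)
      have h2 : (2*y) * (2*y) = 4 * y ^ 2 := by ring
      linarith
    -- the one-step bounds
    have hyδ : y ∈ Set.Icc (-δ) δ := ⟨by linarith, by linarith [hε₀δ]⟩
    have htδ : t ∈ Set.Icc (0:ℝ) (δ^2) := ⟨ht0, le_trans ht.2 ht₀δ⟩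
    have hLt := hLlip y hyδ t htδ
    have hKy := hquad y ⟨le_of_lt hy0, by linarith [hε₀δ]⟩
    have habs1 := abs_le.1 hLt
    have habs2 := abs_le.1 hKy
    have hK'y : K' * y ≤ 1/2 := by nlinarith
    -- lower bound: ρ t y ≥ y (1 - K' y) ≥ y/2 > 0
    have hlow : y * (1 - K' * y) ≤ ρ t y := by nlinarith [habs1.1, habs2.1]
    have hy'pos : 0 < ρ t y := by nlinarith
    -- upper bound: ρ t y < ε₀
    have hLt0 : L * t ≤ L * t₀ := by nlinarith [ht.2]
    have hup : ρ t y < ε₀ := by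
      rcases le_or_gt (ε₀/2) y with hcase | hcase
      · have hLη : L * t₀ ≤ η / 2 := by
          have h2 : L * (η / (2*L)) = η / 2 := by field_simp
          nlinarith
        calc ρ t y ≤ ρ 0 y + L * t := by linarith [habs1.2]
          _ ≤ (y - η) + η/2 := by linarith [hηmin y ⟨hcase, le_of_lt hyε⟩]
          _ < y := by linarith
          _ < ε₀ := hyε
      · have hby := hbelow y ⟨hy0, by linarith [hε₀δ]⟩
        have hLε : L * t₀ ≤ ε₀ / 4 := by
          have h2 : L * (ε₀ / (4*L)) = ε₀ / 4 := by field_simp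
          nlinarith
        calc ρ t y ≤ ρ 0 y + L * t := by linarith [habs1.2]
          _ < y + ε₀/4 := by linarith
          _ < ε₀ := by linarith
    -- the z-invariant
    have hiter : (ρ t)^[k+1] x = ρ t y := by
      rw [hydef, Function.iterate_succ_apply']
    have hzstep : Real.sqrt t / ρ t y ≤ 1 + 2 * K' * Real.sqrt t * (k+1 : ℕ) := by
      have hinv : 1 / ρ t y ≤ (1 + 2 * K' * y) / y := by
        rw [div_le_div_iff₀ hy'pos hy0]
        have e1 : 0 ≤ ρ t y - y * (1 - K' * y) := by linarith
        have e2 : 0 ≤ 1 + 2 * K' * y := by nlinarith [mul_nonneg hK'pos.le hy0.le]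
        have e3 : 0 ≤ (K' * y) * (1 - 2 * (K' * y)) :=
          mul_nonneg (mul_nonneg hK'pos.le hy0.le) (by linarith)
        nlinarith [mul_nonneg e2 e1, mul_nonneg e3 hy0.le]
      have heq : (1 + 2 * K' * y) / y = 1 / y + 2 * K' := by
        field_simp
      have hmul : Real.sqrt t / ρ t y ≤ Real.sqrt t / y + 2 * K' * Real.sqrt t := by
        have h1 : Real.sqrt t / ρ t y = Real.sqrt t * (1 / ρ t y) := by ring
        have h2 : Real.sqrt t * (1 / ρ t y) ≤ Real.sqrt t * (1 / y + 2 * K') := by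
          have h3 := hinv.trans_eq heq
          nlinarith
        rw [h1]
        calc Real.sqrt t * (1 / ρ t y) ≤ Real.sqrt t * (1 / y + 2 * K') := h2
          _ = Real.sqrt t / y + 2 * K' * Real.sqrt t := by ring
      calc Real.sqrt t / ρ t y ≤ Real.sqrt t / y + 2 * K' * Real.sqrt t := hmul
        _ ≤ (1 + 2 * K' * Real.sqrt t * k) + 2 * K' * Real.sqrt t := by linarith
        _ = 1 + 2 * K' * Real.sqrt t * (k+1 : ℕ) := by push_cast; ring
    rw [hiter]
    exact ⟨⟨hy'pos, hup⟩, hzstep⟩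
end

section
/- Let E ⊆ ℝ, let u : E → ℝ, and let α > 0. Define the α-flat set F(u, α) := {x ∈ E : liminf_{y→x, y ∈ E, y ≠ x} log|u(y) − u(x)| / log|y − x| ≥ α}. If A ⊆ F(u, α), then the Hausdorff dimension of u(A) satisfies dim_H(u(A)) ≤ dim_H(A)/α. -/
open Filter Set MeasureTheory

/-- The `α`-flat set of `u : E → ℝ`: points `x ∈ E` where
`liminf_{y→x, y∈E, y≠x} log|u(y) − u(x)| / log|y − x| ≥ α`, with the convention
`log 0 = −∞` (so points `y` with `u(y) = u(x)` contribute `+∞` to the quotient and do not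
obstruct the condition). -/
noncomputable def flatSet (E : Set ℝ) (u : ℝ → ℝ) (α : ℝ) : Set ℝ :=
  {x ∈ E | (α : EReal) ≤
    Filter.liminf
      (fun y : ℝ =>
        if u y = u x then (⊤ : EReal)
        else ((Real.log |u y - u x| / Real.log |y - x| : ℝ) : EReal))
      (nhdsWithin x (E \ {x}))}

open scoped ENNReal NNReal

-- Step 1: pointwise Hölder estimate near each flat point
lemma step1 (E : Set ℝ) (u : ℝ → ℝ) (α β : ℝ) (hβ : 0 < β) (hβα : β < α)
    (x : ℝ) (hx : x ∈ flatSet E u α) :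
    ∃ δ > 0, ∀ y ∈ E, y ≠ x → |y - x| < δ → |u y - u x| ≤ |y - x| ^ β := by
  have hlt : (β : EReal) < (α : EReal) := by exact_mod_cast hβα
  have hev := eventually_lt_of_lt_liminf (lt_of_lt_of_le hlt hx.2)
  rw [Filter.Eventually, Metric.mem_nhdsWithin_iff] at hev
  obtain ⟨ε, hε, hball⟩ := hev
  refine ⟨min ε 1, lt_min hε one_pos, fun y hy hyx hlt' => ?_⟩
  have hmem : y ∈ Metric.ball x ε ∩ (E \ {x}) := by
    constructor
    · rw [Metric.mem_ball, Real.dist_eq]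
      exact lt_of_lt_of_le hlt' (min_le_left _ _)
    · exact ⟨hy, hyx⟩
  have h := hball hmem
  simp only [Set.mem_setOf_eq] at h
  by_cases hu : u y = u x
  · rw [hu, sub_self, abs_zero]
    positivity
  · rw [if_neg hu] at h
    have hq : β < Real.log |u y - u x| / Real.log |y - x| := by exact_mod_cast h
    have hyx0 : 0 < |y - x| := abs_pos.mpr (sub_ne_zero.mpr hyx)
    have hyx1 : |y - x| < 1 := lt_of_lt_of_le hlt' (min_le_right _ _)
    have hlog : Real.log |y - x| < 0 := Real.log_neg hyx0 hyx1
    have h2 : Real.log |u y - u x| < β * Real.log |y - x| := by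
      rwa [lt_div_iff_of_neg hlog] at hq
    have hu0 : 0 < |u y - u x| := abs_pos.mpr (sub_ne_zero.mpr hu)
    have := Real.exp_lt_exp.mpr h2
    rw [Real.exp_log hu0, ← Real.log_rpow hyx0, Real.exp_log (Real.rpow_pos_of_pos hyx0 β)] at this
    exact this.le

lemma step2 (E : Set ℝ) (u : ℝ → ℝ) (α : ℝ) (A : Set ℝ) (hA : A ⊆ flatSet E u α)
    (β : ℝ) (hβ : 0 < β) (hβα : β < α) :
    dimH (u '' A) ≤ dimH A / ENNReal.ofReal β := by
  set r : ℝ≥0 := β.toNNReal with hr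
  have hr0 : 0 < r := Real.toNNReal_pos.mpr hβ
  have hrβ : (r : ℝ) = β := Real.coe_toNNReal β hβ.le
  -- the pieces
  set B : ℕ → ℤ → Set ℝ := fun n k =>
    {x ∈ A | ∀ y ∈ E, y ≠ x → |y - x| < 1 / (n + 1 : ℝ) → |u y - u x| ≤ |y - x| ^ β} ∩
      Ico ((k : ℝ) / (n + 1)) ((k + 1 : ℝ) / (n + 1)) with hB
  have hn1 : ∀ n : ℕ, (0 : ℝ) < n + 1 := fun n => by positivity
  -- A is covered by the pieces
  have hcover : A ⊆ ⋃ (n : ℕ) (k : ℤ), B n k := by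
    intro x hx
    obtain ⟨δ, hδ, hδx⟩ := step1 E u α β hβ hβα x (hA hx)
    obtain ⟨n, hn⟩ := exists_nat_one_div_lt hδ
    refine mem_iUnion.mpr ⟨n, mem_iUnion.mpr ⟨⌊x * (n + 1)⌋, ?_, ?_⟩⟩
    · exact ⟨hx, fun y hy hyx hlt => hδx y hy hyx (hlt.trans hn)⟩
    · constructor
      · rw [div_le_iff₀ (hn1 n)]
        exact Int.floor_le _
      · rw [lt_div_iff₀ (hn1 n)]
        push_cast
        exact Int.lt_floor_add_one _
  -- u is Hölder on each piece
  have hhold : ∀ (n : ℕ) (k : ℤ), HolderOnWith 1 r u (B n k) := by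
    intro n k x hx y hy
    rcases eq_or_ne y x with rfl | hyx
    · simp
    have hxE : x ∈ E := (hA hx.1.1).1
    have hdist : |y - x| < 1 / (n + 1 : ℝ) := by
      have h1 := hx.2.1; have h2 := hx.2.2; have h3 := hy.2.1; have h4 := hy.2.2
      have e : ((k : ℝ) + 1) / ((n : ℝ) + 1) = (k : ℝ) / ((n : ℝ) + 1) + 1 / ((n : ℝ) + 1) := by
        ring
      rw [abs_lt]
      constructor <;> linarith
    have key : |u y - u x| ≤ |y - x| ^ β := hx.1.2 y (hA hy.1.1).1 hyx hdist
    have hyx0 : 0 < |y - x| := abs_pos.mpr (sub_ne_zero.mpr hyx)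
    rw [edist_dist, edist_dist, Real.dist_eq, Real.dist_eq, ← abs_sub_comm y x,
      ← abs_sub_comm (u y) (u x), ENNReal.coe_one, one_mul]
    calc ENNReal.ofReal |u y - u x| ≤ ENNReal.ofReal (|y - x| ^ β) :=
          ENNReal.ofReal_le_ofReal key
      _ = ENNReal.ofReal |y - x| ^ (r : ℝ) := by
          rw [hrβ, ENNReal.ofReal_rpow_of_pos hyx0]
  -- put it together
  have himg : u '' A ⊆ ⋃ (n : ℕ) (k : ℤ), u '' B n k := by
    refine (image_mono (f := u) hcover).trans ?_
    rw [image_iUnion]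
    exact iUnion_mono fun n => by rw [image_iUnion]
  calc dimH (u '' A) ≤ dimH (⋃ (n : ℕ) (k : ℤ), u '' B n k) := dimH_mono himg
    _ = ⨆ (n : ℕ) (k : ℤ), dimH (u '' B n k) := by rw [dimH_iUnion]; simp_rw [dimH_iUnion]
    _ ≤ dimH A / ENNReal.ofReal β := by
        refine iSup_le fun n => iSup_le fun k => ?_
        have := (hhold n k).dimH_image_le hr0
        refine this.trans ?_
        have : (r : ℝ≥0∞) = ENNReal.ofReal β := by
          rw [← hrβ]; simp [ENNReal.ofReal_coe_nnreal]
        rw [← this]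
        exact ENNReal.div_le_div_right (dimH_mono (fun x hx => hx.1.1)) _

/-- Lemma: if `A ⊆ F(u, α)`, then `dim_H(u(A)) ≤ dim_H(A)/α`. -/
theorem dimH_image_le_of_flat (E : Set ℝ) (u : ℝ → ℝ) (α : ℝ) (hα : 0 < α)
    (A : Set ℝ) (hA : A ⊆ flatSet E u α) :
    dimH (u '' A) ≤ dimH A / ENNReal.ofReal α := by
  rw [ENNReal.le_div_iff_mul_le (Or.inl (by simp [hα])) (Or.inl ENNReal.ofReal_ne_top)]
  have htend : Tendsto (fun β : ℝ => dimH (u '' A) * ENNReal.ofReal β)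
      (nhdsWithin α (Ioo (α / 2) α)) (nhds (dimH (u '' A) * ENNReal.ofReal α)) := by
    refine ENNReal.Tendsto.const_mul ?_ (Or.inl (by simp [hα]))
    exact (ENNReal.continuous_ofReal.tendsto α).mono_left nhdsWithin_le_nhds
  have hne : (nhdsWithin α (Ioo (α / 2) α)).NeBot := by
    apply mem_closure_iff_nhdsWithin_neBot.mp
    rw [closure_Ioo (by linarith : α / 2 ≠ α)]
    exact ⟨by linarith, le_rfl⟩
  refine le_of_tendsto htend ?_
  filter_upwards [self_mem_nhdsWithin] with β hβ
  have h1 : 0 < β := lt_trans (by linarith) hβ.1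
  have h2 := step2 E u α A hA β h1 hβ.2
  rwa [ENNReal.le_div_iff_mul_le (Or.inl (by simp [h1])) (Or.inl ENNReal.ofReal_ne_top)] at h2
end

section
/- Let C ≥ 1, γ ≥ 1 and let g : ℝ → ℝ be a C¹ map whose derivative satisfies |g'(x)| ≤ min(C|x|, γ) for all x ∈ ℝ. Let n ≥ 0. If |g^{n+1}(0)| ≤ (1/4) C^{-1} γ^{-n}, then g^{n+1} has an attracting fixed point: there exists p with |p| ≤ (1/2) C^{-1} γ^{-n}, g^{n+1}(p) = p, and |(g^{n+1})'(p)| ≤ 1/2. Equivalently, if g has no such attracting periodic point of period dividing n+1, then |g^{n+1}(0)| > (1/4) C^{-1} γ^{-n}. -/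
open Set

private lemma iterate_hasDerivAt {g : ℝ → ℝ} (hg : Differentiable ℝ g) (m : ℕ) (x : ℝ) :
    HasDerivAt (g^[m]) (∏ i ∈ Finset.range m, deriv g (g^[i] x)) x := by
  induction m with
  | zero => simpa using hasDerivAt_id x
  | succ m ih =>
    rw [Function.iterate_succ', Finset.prod_range_succ]
    have h1 : HasDerivAt g (deriv g (g^[m] x)) (g^[m] x) := (hg _).hasDerivAt
    simpa [mul_comm] using h1.comp x ih

/-- Lemma (Przytycki): let `g` be C¹ with `|g'(x)| ≤ min(C|x|, γ)` for all `x`.  If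
`|g^{n+1}(0)| ≤ (1/4)·C⁻¹·γ^{−n}`, then `g^{n+1}` has an attracting fixed point `p` with
`|p| ≤ (1/2)·C⁻¹·γ^{−n}` and `|(g^{n+1})'(p)| ≤ 1/2`. -/
theorem attracting_fixed_point_of_close_return (C γ : ℝ) (hC : 1 ≤ C) (hγ : 1 ≤ γ)
    (g : ℝ → ℝ) (hg : ContDiff ℝ 1 g)
    (hder : ∀ x : ℝ, |deriv g x| ≤ min (C * |x|) γ) (n : ℕ)
    (hclose : |g^[n + 1] 0| ≤ 1 / 4 * C⁻¹ * (γ ^ n)⁻¹) :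
    ∃ p : ℝ, |p| ≤ 1 / 2 * C⁻¹ * (γ ^ n)⁻¹ ∧ g^[n + 1] p = p ∧
      |deriv (g^[n + 1]) p| ≤ 1 / 2 := by
  have hgd : Differentiable ℝ g := hg.differentiable one_ne_zero
  have hC0 : (0 : ℝ) < C := lt_of_lt_of_le one_pos hC
  have hγn : (0 : ℝ) < γ ^ n := pow_pos (lt_of_lt_of_le one_pos hγ) n
  set r : ℝ := 1 / 2 * C⁻¹ * (γ ^ n)⁻¹ with hr
  have hr0 : 0 < r := by positivity
  -- derivative bound on [-r, r]
  have hderiv_bound : ∀ x : ℝ, |x| ≤ r → |deriv (g^[n + 1]) x| ≤ 1 / 2 := by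
    intro x hx
    have hD := (iterate_hasDerivAt hgd (n + 1) x).deriv
    rw [hD, Finset.abs_prod, Finset.prod_range_succ']
    have h1 : ∏ i ∈ Finset.range n, |deriv g (g^[i + 1] x)| ≤ γ ^ n := by
      calc ∏ i ∈ Finset.range n, |deriv g (g^[i + 1] x)|
          ≤ ∏ _i ∈ Finset.range n, γ := by
            apply Finset.prod_le_prod (fun i _ => abs_nonneg _)
            exact fun i _ => le_trans (hder _) (min_le_right _ _)
        _ = γ ^ n := by simp
    have h2 : |deriv g (g^[0] x)| ≤ C * r := by
      calc |deriv g (g^[0] x)| ≤ C * |x| := by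
            simpa using le_trans (hder x) (min_le_left _ _)
        _ ≤ C * r := by nlinarith
    calc (∏ i ∈ Finset.range n, |deriv g (g^[i + 1] x)|) * |deriv g (g^[0] x)|
        ≤ γ ^ n * (C * r) := by
          apply mul_le_mul h1 h2 (abs_nonneg _)
          exact le_of_lt hγn
      _ = 1 / 2 := by rw [hr]; field_simp
  -- g^[n+1] maps [-r, r] into itself
  have hdiff : ∀ x : ℝ, DifferentiableAt ℝ (g^[n + 1]) x :=
    fun x => (iterate_hasDerivAt hgd (n + 1) x).differentiableAt
  have hlip : ∀ x ∈ Icc (-r) r, |g^[n + 1] x - g^[n + 1] 0| ≤ 1 / 2 * |x| := by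
    intro x hx
    have h0 : (0 : ℝ) ∈ Icc (-r) r := by constructor <;> linarith
    have := (convex_Icc (-r) r).norm_image_sub_le_of_norm_deriv_le
      (fun y _ => hdiff y) (fun y hy => hderiv_bound y (abs_le.2 hy)) h0 hx
    simpa using this
  have hmaps : ∀ x ∈ Icc (-r) r, |g^[n + 1] x| ≤ r := by
    intro x hx
    have h1 := hlip x hx
    have h2 : |x| ≤ r := abs_le.2 hx
    have h3 : |g^[n + 1] x| ≤ |g^[n + 1] x - g^[n + 1] 0| + |g^[n + 1] 0| := by
      simpa using abs_add_le (g^[n + 1] x - g^[n + 1] 0) (g^[n + 1] 0)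
    calc |g^[n + 1] x| ≤ |g^[n + 1] x - g^[n + 1] 0| + |g^[n + 1] 0| := h3
      _ ≤ 1 / 2 * |x| + 1 / 4 * C⁻¹ * (γ ^ n)⁻¹ := add_le_add h1 hclose
      _ ≤ r := by rw [hr] at h2 ⊢; nlinarith
  -- IVT for h x = g^[n+1] x - x
  have hcont : ContinuousOn (fun x => g^[n + 1] x - x) (Icc (-r) r) :=
    ((hg.continuous.iterate (n + 1)).sub continuous_id).continuousOn
  have hmem : (0 : ℝ) ∈ Icc ((fun x => g^[n + 1] x - x) r) ((fun x => g^[n + 1] x - x) (-r)) := by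
    have h1 := hmaps r ⟨by linarith, le_refl r⟩
    have h2 := hmaps (-r) ⟨le_refl _, by linarith⟩
    rw [abs_le] at h1 h2
    show (0 : ℝ) ∈ Icc (g^[n + 1] r - r) (g^[n + 1] (-r) - (-r))
    rw [Set.mem_Icc]
    exact ⟨by linarith [h1.2], by linarith [h2.1]⟩
  obtain ⟨p, hp, hfp⟩ := intermediate_value_Icc' (by linarith : -r ≤ r) hcont hmem
  have hfp' : g^[n + 1] p - p = 0 := hfp
  exact ⟨p, abs_le.2 hp, by linarith, hderiv_bound p (abs_le.2 hp)⟩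
end
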